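/- arXiv:2109.01131 — 4 statements merged into one kernel-verified Lean document; each statement's English description precedes it below -/
import Mathlib

section
/- Let E ⊆ (ℕ⁺)ⁿ × (ℕ⁺)ⁿ be an equivalence relation on (ℕ⁺)ⁿ that is ∅-definable (as a subset of (ℕ⁺)^{2n}). Then for every ā ∈ (ℕ⁺)ⁿ there exists ā' ∈ (ℕ⁺)ⁿ with E(ā, ā') and σ(ā) ∩ σ(ā') = ⋂_{b̄ : E(ā, b̄)} σ(b̄). -/
open FirstOrder Language

/-- The language `L` with one binary function symbol `·` and one constant symbol `1`. -/
def L : FirstOrder.Language :=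
  ⟨fun n => match n with | 0 => Unit | 2 => Unit | _ => Empty, fun _ => Empty⟩

/-- Any monoid is an `L`-structure, with `·` interpreted as multiplication and `1` as the
identity. In particular `ℕ+` is the standard model of Skolem arithmetic, and
`Multiplicative ℕ` is the additive `L`-structure `(ℕ, +, 0)`. -/
instance (M : Type*) [Monoid M] : L.Structure M where
  funMap {n} f x :=
    match n, f, x with
    | 0, _, _ => 1
    | 2, _, x => x 0 * x 1
  RelMap r _ := r.elim

/-- The support of a tuple: the set of primes dividing some component. -/
def PSupp {n : ℕ} (a : Fin n → ℕ+) : Set ℕ := {p | p.Prime ∧ ∃ i, p ∣ (a i : ℕ)}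

namespace SkolemAux

/-- The map on `ℕ` induced by a prime-preserving permutation of `ℕ`. -/
def Fmap (e : ℕ ≃ ℕ) (m : ℕ) : ℕ := m.factorization.prod fun p k => e p ^ k

theorem Fmap_pos (e : ℕ ≃ ℕ) (he : ∀ p : ℕ, p.Prime → (e p).Prime) (m : ℕ) :
    0 < Fmap e m := by
  rw [Fmap, Finsupp.prod]
  apply Finset.prod_pos
  intro p hp
  exact pow_pos (he p (Nat.prime_of_mem_primeFactors hp)).pos _

theorem Fmap_mul (e : ℕ ≃ ℕ) {m k : ℕ} (hm : m ≠ 0) (hk : k ≠ 0) :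
    Fmap e (m * k) = Fmap e m * Fmap e k := by
  unfold Fmap
  rw [Nat.factorization_mul hm hk]
  exact Finsupp.prod_add_index' (fun a => pow_zero _) (fun a b c => pow_add _ _ _)

theorem factorization_Fmap (e : ℕ ≃ ℕ) (he : ∀ p : ℕ, p.Prime → (e p).Prime)
    {m : ℕ} (hm : m ≠ 0) :
    (Fmap e m).factorization = Finsupp.equivMapDomain e m.factorization := by
  have h : Fmap e m = (Finsupp.equivMapDomain e m.factorization).prod (· ^ ·) :=
    (Finsupp.prod_equivMapDomain e _ _).symm
  rw [h, Nat.prod_pow_factorization_eq_self]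
  intro p hp
  rw [Finsupp.mem_support_iff, Finsupp.equivMapDomain_apply] at hp
  have h2 : (e.symm p) ∈ m.factorization.support := Finsupp.mem_support_iff.2 hp
  have h3 : (e.symm p).Prime := Nat.prime_of_mem_primeFactors h2
  have := he _ h3
  rw [Equiv.apply_symm_apply] at this
  exact this

theorem Fmap_Fmap (e : ℕ ≃ ℕ) (he : ∀ p : ℕ, p.Prime → (e p).Prime)
    {m : ℕ} (hm : m ≠ 0) : Fmap e.symm (Fmap e m) = m := by
  rw [show Fmap e.symm (Fmap e m) = ((Fmap e m).factorization.prod fun p k => e.symm p ^ k) from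
    rfl, factorization_Fmap e he hm, Finsupp.prod_equivMapDomain]
  simp only [Equiv.symm_apply_apply]
  exact Nat.factorization_prod_pow_eq_self hm

theorem dvd_Fmap_iff (e : ℕ ≃ ℕ) {p m : ℕ} (hp : p.Prime) (hp' : (e.symm p).Prime)
    (he : ∀ p : ℕ, p.Prime → (e p).Prime) (hm : m ≠ 0) :
    p ∣ Fmap e m ↔ e.symm p ∣ m := by
  rw [Nat.Prime.dvd_iff_one_le_factorization hp (Fmap_pos e he m).ne',
    Nat.Prime.dvd_iff_one_le_factorization hp' hm, factorization_Fmap e he hm,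
    Finsupp.equivMapDomain_apply]

theorem Fmap_eq_self (e : ℕ ≃ ℕ) {m : ℕ} (hm : m ≠ 0)
    (h : ∀ p ∈ m.factorization.support, e p = p) : Fmap e m = m := by
  unfold Fmap
  rw [Finsupp.prod_congr (g2 := (· ^ ·)) (fun p hp => by rw [h p hp])]
  exact Nat.factorization_prod_pow_eq_self hm

/-- The multiplicative automorphism of `ℕ+` induced by a prime-preserving
permutation of `ℕ`. -/
def pnatMulEquiv (e : ℕ ≃ ℕ) (he : ∀ p : ℕ, p.Prime → (e p).Prime)
    (he' : ∀ p : ℕ, p.Prime → (e.symm p).Prime) : ℕ+ ≃* ℕ+ where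
  toFun m := ⟨Fmap e m, Fmap_pos e he m⟩
  invFun m := ⟨Fmap e.symm m, Fmap_pos e.symm he' m⟩
  left_inv m := by
    apply Subtype.ext
    exact Fmap_Fmap e he m.ne_zero
  right_inv m := by
    apply Subtype.ext
    have := Fmap_Fmap e.symm he' (m := (m : ℕ)) m.ne_zero
    rwa [Equiv.symm_symm] at this
  map_mul' a b := by
    apply Subtype.ext
    exact Fmap_mul e a.ne_zero b.ne_zero

/-- A multiplicative automorphism of `ℕ+` as an `L`-isomorphism. -/
def LEquivOf (τ : ℕ+ ≃* ℕ+) : _root_.L.Equiv ℕ+ ℕ+ where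
  toEquiv := τ.toEquiv
  map_fun' := by
    intro k f x
    match k, f with
    | 0, _ => exact τ.map_one
    | 1, f => exact Empty.elim f
    | 2, _ => exact τ.map_mul _ _
    | (k+3), f => exact Empty.elim f
  map_rel' := by intro k r; exact Empty.elim r

end SkolemAux

theorem PSupp_finite {n : ℕ} (a : Fin n → ℕ+) : (PSupp a).Finite := by
  apply Set.Finite.subset
    (Set.finite_iUnion (fun i : Fin n => ((a i : ℕ).primeFactors).finite_toSet))
  rintro p ⟨hp, i, hi⟩
  exact Set.mem_iUnion.2 ⟨i, Nat.mem_primeFactors.2 ⟨hp, hi, (a i).ne_zero⟩⟩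

/-- For a `∅`-definable equivalence relation `E` and any tuple `ā`, there is an
`E`-equivalent tuple `ā'` with `σ(ā) ∩ σ(ā') = ⋂_{E(ā,b̄)} σ(b̄)`. -/
theorem equivalent_tuple_with_minimal_common_support (n : ℕ)
    (E : (Fin n → ℕ+) → (Fin n → ℕ+) → Prop) (hE : Equivalence E)
    (hdef : ∃ φ : L.Formula (Fin n ⊕ Fin n), ∀ a b, E a b ↔ φ.Realize (Sum.elim a b)) :
    ∀ a : Fin n → ℕ+, ∃ a' : Fin n → ℕ+, E a a' ∧
      PSupp a ∩ PSupp a' = ⋂ b ∈ {b | E a b}, PSupp b := by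
  obtain ⟨φ, hφ⟩ := hdef
  intro a
  -- E is invariant under multiplicative automorphisms of ℕ+
  have hinv : ∀ (τ : ℕ+ ≃* ℕ+) (u v : Fin n → ℕ+), E u v → E (⇑τ ∘ u) (⇑τ ∘ v) := by
    intro τ u v huv
    rw [hφ] at huv ⊢
    have h : Sum.elim (⇑τ ∘ u) (⇑τ ∘ v) = ⇑(SkolemAux.LEquivOf τ) ∘ Sum.elim u v := by
      funext x; cases x <;> rfl
    rw [h]
    exact (StrongHomClass.realize_formula (SkolemAux.LEquivOf τ) φ).2 huv
  set S : Set ℕ := ⋂ b ∈ {b | E a b}, PSupp b with hSdef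
  have hSsub : ∀ b, E a b → S ⊆ PSupp b := fun b hb => Set.biInter_subset_of_mem hb
  have key : ∀ (k : ℕ) (b : Fin n → ℕ+), E a b → ((PSupp a ∩ PSupp b) \ S).ncard ≤ k →
      ∃ a', E a a' ∧ PSupp a ∩ PSupp a' ⊆ S := by
    intro k
    induction k with
    | zero =>
      intro b hb hcard
      refine ⟨b, hb, fun x hx => ?_⟩
      by_contra hxs
      have hfin : ((PSupp a ∩ PSupp b) \ S).Finite :=
        (PSupp_finite a).subset (fun y hy => hy.1.1)
      have hpos : 0 < ((PSupp a ∩ PSupp b) \ S).ncard :=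
        (Set.ncard_pos hfin).2 ⟨x, hx, hxs⟩
      omega
    | succ k ih =>
      intro b hb hcard
      by_cases hne : ((PSupp a ∩ PSupp b) \ S).Nonempty
      · obtain ⟨p, hp⟩ := hne
        have hpprime : p.Prime := hp.1.1.1
        have hpS : p ∉ S := hp.2
        have hec : ∃ c, E a c ∧ p ∉ PSupp c := by
          by_contra h
          push_neg at h
          exact hpS (Set.mem_biInter fun c hc => h c hc)
        obtain ⟨c, hc, hpc⟩ := hec
        have hfin : (PSupp a ∪ PSupp b ∪ PSupp c).Finite :=
          ((PSupp_finite a).union (PSupp_finite b)).union (PSupp_finite c)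
        obtain ⟨q, hq⟩ := (Nat.infinite_setOf_prime.diff hfin).nonempty
        obtain ⟨hqprime, hqn⟩ := hq
        have hqa : q ∉ PSupp a := fun h => hqn (Or.inl (Or.inl h))
        have hqb : q ∉ PSupp b := fun h => hqn (Or.inl (Or.inr h))
        have hqc : q ∉ PSupp c := fun h => hqn (Or.inr h)
        have hpq : p ≠ q := by rintro rfl; exact hqa hp.1.1
        set e := Equiv.swap p q with hedef
        have he : ∀ r : ℕ, r.Prime → (e r).Prime := by
          intro r hr
          rcases eq_or_ne r p with rfl | h1
          · rwa [hedef, Equiv.swap_apply_left]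
          rcases eq_or_ne r q with rfl | h2
          · rwa [hedef, Equiv.swap_apply_right]
          · rwa [hedef, Equiv.swap_apply_of_ne_of_ne h1 h2]
        have hesymm : e.symm = e := Equiv.symm_swap p q
        have he' : ∀ r : ℕ, r.Prime → (e.symm r).Prime := by rw [hesymm]; exact he
        set τ := SkolemAux.pnatMulEquiv e he he' with hτdef
        have hτapp : ∀ m : ℕ+, (τ m : ℕ) = SkolemAux.Fmap e (m : ℕ) := fun m => rfl
        -- τ fixes c
        have hτc : ⇑τ ∘ c = c := by
          funext i
          apply PNat.coe_injective
          rw [Function.comp_apply, hτapp]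
          apply SkolemAux.Fmap_eq_self e (c i).ne_zero
          intro r hr
          have hrp : r.Prime := Nat.prime_of_mem_primeFactors hr
          have hrd : r ∣ (c i : ℕ) := Nat.dvd_of_mem_primeFactors hr
          have h1 : r ≠ p := fun h => hpc ⟨hpprime, i, h ▸ hrd⟩
          have h2 : r ≠ q := fun h => hqc ⟨hqprime, i, h ▸ hrd⟩
          rw [hedef, Equiv.swap_apply_of_ne_of_ne h1 h2]
        have h1 : E (⇑τ ∘ a) (⇑τ ∘ b) := hinv τ _ _ hb
        have h2 : E (⇑τ ∘ a) c := by
          have := hinv τ _ _ hc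
          rwa [hτc] at this
        have hab' : E a (⇑τ ∘ b) := hE.trans hc (hE.trans (hE.symm h2) h1)
        -- support of τ ∘ b
        have hmem : ∀ x : ℕ, x.Prime → (x ∈ PSupp (⇑τ ∘ b) ↔ e x ∈ PSupp b) := by
          intro x hx
          constructor
          · rintro ⟨-, i, hi⟩
            rw [Function.comp_apply, hτapp] at hi
            rw [SkolemAux.dvd_Fmap_iff e hx (he' x hx) he (b i).ne_zero, hesymm] at hi
            exact ⟨he x hx, i, hi⟩
          · rintro ⟨-, i, hi⟩
            refine ⟨hx, i, ?_⟩
            rw [Function.comp_apply, hτapp,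
              SkolemAux.dvd_Fmap_iff e hx (he' x hx) he (b i).ne_zero, hesymm]
            exact hi
        have hsupp : PSupp a ∩ PSupp (⇑τ ∘ b) = (PSupp a ∩ PSupp b) \ {p} := by
          ext x
          constructor
          · rintro ⟨hxa, hxb'⟩
            have hxp : x.Prime := hxa.1
            have hxq : x ≠ q := fun h => hqa (h ▸ hxa)
            have hxpne : x ≠ p := by
              rintro rfl
              rw [hmem x hxp, hedef, Equiv.swap_apply_left] at hxb'
              exact hqb hxb'
            refine ⟨⟨hxa, ?_⟩, hxpne⟩
            rw [hmem x hxp, hedef, Equiv.swap_apply_of_ne_of_ne hxpne hxq] at hxb'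
            exact hxb'
          · rintro ⟨⟨hxa, hxb⟩, hxpne⟩
            have hxp : x.Prime := hxa.1
            have hxq : x ≠ q := fun h => hqa (h ▸ hxa)
            refine ⟨hxa, ?_⟩
            rw [hmem x hxp, hedef,
              Equiv.swap_apply_of_ne_of_ne (fun h => hxpne (by simp [h])) hxq]
            exact hxb
        have hfinD : ((PSupp a ∩ PSupp b) \ S).Finite :=
          (PSupp_finite a).subset (fun y hy => hy.1.1)
        have hlt := Set.ncard_diff_singleton_lt_of_mem hp hfinD
        apply ih (⇑τ ∘ b) hab'
        rw [hsupp, Set.diff_diff_comm]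
        omega
      · refine ⟨b, hb, fun x hx => ?_⟩
        by_contra hxs
        exact hne ⟨x, hx, hxs⟩
  obtain ⟨a', ha', hsub⟩ := key (((PSupp a ∩ PSupp a) \ S).ncard) a (hE.refl a) le_rfl
  refine ⟨a', ha', Set.Subset.antisymm hsub ?_⟩
  intro x hx
  exact ⟨hSsub a (hE.refl a) hx, hSsub a' ha' hx⟩
end

section
/- Let D ⊆ (ℕ⁺)ⁿ be definable over some tuple s̄ ∈ (ℕ⁺)^k all of whose components are squarefree. Then there exist m ∈ ℕ and a tuple r̄ = (r₁,…,r_m) ∈ (ℕ⁺)^m such that: (i) each rᵢ is squarefree; (ii) rᵢ and r_j are coprime for all i ≠ j; (iii) D is definable over r̄; and (iv) for every tuple c̄ over which D is definable, σ(r̄) ⊆ σ(c̄). -/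
open FirstOrder Language

/-- `r` is squarefree: no square of a prime divides it. -/
def Sqf (r : ℕ+) : Prop := ∀ p : ℕ+, (p : ℕ).Prime → ¬ p * p ∣ r

namespace SkolemAux

noncomputable section
variable {M : Type*} [Monoid M] {β : Type*}

def mulF : L.Functions 2 := ()
def oneF : L.Functions 0 := ()

def tmul (t u : L.Term β) : L.Term β := Term.func mulF ![t, u]
def tone : L.Term β := Term.func oneF ![]

@[simp] lemma realize_tmul (v : β → M) (t u : L.Term β) :
    (tmul t u).realize v = t.realize v * u.realize v := rfl

@[simp] lemma realize_tone (v : β → M) : (tone : L.Term β).realize v = 1 := rfl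

def tprod (ts : List (L.Term β)) : L.Term β := ts.foldr tmul tone

@[simp] lemma realize_tprod (v : β → M) (ts : List (L.Term β)) :
    (tprod ts).realize v = (ts.map (fun t => t.realize v)).prod := by
  induction ts with
  | nil => simp [tprod]
  | cons t ts ih => simp [tprod, List.foldr] at ih ⊢; rw [ih]

/-- A `MulEquiv` of a monoid is an `L`-equivalence. -/
def mulEquivL (e : M ≃* M) : L.Equiv M M where
  toEquiv := e.toEquiv
  map_fun' := fun {n} f x => by
    match n, f with
    | 0, _ => exact map_one e
    | 2, _ => exact map_mul e _ _
  map_rel' := fun {n} r x => r.elim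

lemma realize_mulEquiv (e : M ≃* M) {α : Type*} (φ : L.Formula α) (v : α → M) :
    φ.Realize (fun a => e (v a)) ↔ φ.Realize v :=
  StrongHomClass.realize_formula (mulEquivL e) (φ := φ)

end

section Formulas
noncomputable section
variable {M : Type*} [Monoid M] {β : Type*}
/-- divisibility formula: `∃ z, u = t * z`. -/
def dvdF (t u : L.Term β) : L.Formula β :=
  Formula.iExs Unit
    (Term.equal (u.relabel Sum.inl) (tmul (t.relabel Sum.inl) (Term.var (Sum.inr ()))))

@[simp] lemma realize_dvdF (v : β → M) (t u : L.Term β) :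
    (dvdF t u).Realize v ↔ t.realize v ∣ u.realize v := by
  simp [dvdF, dvd_def, Formula.realize_iExs, Formula.realize_equal, Term.realize_relabel]
  constructor
  · rintro ⟨i, h⟩; exact ⟨i (), by simpa using h⟩
  · rintro ⟨c, h⟩; exact ⟨fun _ => c, by simpa using h⟩

/-- primality formula. -/
def primeF (t : L.Term β) : L.Formula β :=
  (Term.equal t tone).not ⊓
    Formula.iAlls Unit
      ((dvdF (Term.var (Sum.inr ())) (t.relabel Sum.inl)).imp
        ((Term.equal (Term.var (Sum.inr ())) tone) ⊔
          (Term.equal (Term.var (Sum.inr ())) (t.relabel Sum.inl))))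

lemma realize_primeF (v : β → ℕ+) (t : L.Term β) :
    (primeF t).Realize v ↔ ((t.realize v : ℕ+) : ℕ).Prime := by
  have h1 : (primeF t).Realize v ↔
      (t.realize v ≠ 1 ∧ ∀ y : ℕ+, y ∣ t.realize v → y = 1 ∨ y = t.realize v) := by
    simp [primeF, Formula.realize_iAlls, Formula.realize_equal, Term.realize_relabel,
      Formula.realize_inf, Formula.realize_not, Formula.realize_imp, Formula.realize_sup]
    intro _
    exact ⟨fun h y hy => h (fun _ => y) hy, fun h i hi => h (i ()) hi⟩
  rw [h1]
  constructor
  · rintro ⟨h, h2⟩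
    rw [Nat.prime_def]
    constructor
    · rcases Nat.lt_or_ge ((t.realize v : ℕ+) : ℕ) 2 with h' | h'
      · exfalso; apply h
        have : 0 < ((t.realize v : ℕ+) : ℕ) := (t.realize v).pos
        apply PNat.coe_injective
        have h1 : ((1 : ℕ+) : ℕ) = 1 := rfl
        omega
      · exact h'
    · intro m hm
      have hmpos : 0 < m := Nat.pos_of_dvd_of_pos hm (t.realize v).pos
      have := h2 ⟨m, hmpos⟩ (PNat.dvd_iff.2 hm)
      rcases this with h' | h'
      · left; exact congrArg (fun x : ℕ+ => (x : ℕ)) h'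
      · right; exact congrArg (fun x : ℕ+ => (x : ℕ)) h'
  · intro hp
    refine ⟨fun h => by simp [h] at hp; exact hp.ne_one rfl, fun y hy => ?_⟩
    rcases hp.eq_one_or_self_of_dvd y (PNat.dvd_iff.1 hy) with h | h
    · left; exact PNat.coe_injective h
    · right; exact PNat.coe_injective h

end
end Formulas

noncomputable section

variable {p q : ℕ}

/-- Swap the primes `p` and `q` in the factorization of `a`. -/
def swapN (p q : ℕ) (a : ℕ) : ℕ :=
  ((a.factorization.equivMapDomain (Equiv.swap p q)).prod (· ^ ·))

lemma support_swap_prime (hp : p.Prime) (hq : q.Prime) (a : ℕ) :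
    ∀ x ∈ (a.factorization.equivMapDomain (Equiv.swap p q)).support, Nat.Prime x := by
  intro x hx
  have : x ∈ a.factorization.support.map (Equiv.swap p q).toEmbedding := hx
  rw [Finset.mem_map] at this
  obtain ⟨y, hy, rfl⟩ := this
  have hyp : y.Prime :=
    Nat.prime_of_mem_primeFactors (by simpa [Nat.support_factorization] using hy)
  rcases eq_or_ne y p with rfl | h1
  · simpa [Equiv.swap_apply_left] using hq
  rcases eq_or_ne y q with rfl | h2
  · simpa [Equiv.swap_apply_right] using hp
  · simpa [Equiv.swap_apply_of_ne_of_ne h1 h2] using hyp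

lemma swapN_pos (hp : p.Prime) (hq : q.Prime) (a : ℕ) : 0 < swapN p q a := by
  unfold swapN
  rw [Finsupp.prod]
  apply Finset.prod_pos
  intro x hx
  exact pow_pos (support_swap_prime hp hq a x hx).pos _

lemma factorization_swapN (hp : p.Prime) (hq : q.Prime) (a : ℕ) :
    (swapN p q a).factorization = a.factorization.equivMapDomain (Equiv.swap p q) :=
  Nat.prod_pow_factorization_eq_self
    (support_swap_prime hp hq a)

lemma swapN_mul (hp : p.Prime) (hq : q.Prime) {a b : ℕ} (ha : a ≠ 0) (hb : b ≠ 0) :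
    swapN p q (a * b) = swapN p q a * swapN p q b := by
  unfold swapN
  rw [Nat.factorization_mul ha hb]
  have : (a.factorization + b.factorization).equivMapDomain (Equiv.swap p q)
      = a.factorization.equivMapDomain (Equiv.swap p q)
        + b.factorization.equivMapDomain (Equiv.swap p q) := by
    ext x; simp [Finsupp.equivMapDomain_apply]
  rw [this]
  exact Finsupp.prod_add_index (fun x _ => pow_zero x) (fun x _ m n => pow_add x m n)

lemma swapN_one : swapN p q 1 = 1 := by
  unfold swapN
  simp

lemma swapN_swapN (hp : p.Prime) (hq : q.Prime) {a : ℕ} (ha : a ≠ 0) :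
    swapN p q (swapN p q a) = a := by
  conv_lhs => rw [swapN, factorization_swapN hp hq]
  have : (a.factorization.equivMapDomain (Equiv.swap p q)).equivMapDomain (Equiv.swap p q)
      = a.factorization := by
    ext x; simp [Finsupp.equivMapDomain_apply]
  rw [this]
  exact Nat.factorization_prod_pow_eq_self ha

lemma swapN_of_not_dvd (hp : p.Prime) (hq : q.Prime) {a : ℕ} (ha : a ≠ 0)
    (h1 : ¬ p ∣ a) (h2 : ¬ q ∣ a) : swapN p q a = a := by
  unfold swapN
  have hfp : a.factorization p = 0 := by
    simp [Nat.factorization_eq_zero_iff, h1]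
  have hfq : a.factorization q = 0 := by
    simp [Nat.factorization_eq_zero_iff, h2]
  have : a.factorization.equivMapDomain (Equiv.swap p q) = a.factorization := by
    ext x
    rw [Finsupp.equivMapDomain_apply, Equiv.symm_swap]
    rcases eq_or_ne x p with rfl | h1'
    · rw [Equiv.swap_apply_left, hfq, hfp]
    rcases eq_or_ne x q with rfl | h2'
    · rw [Equiv.swap_apply_right, hfq, hfp]
    · rw [Equiv.swap_apply_of_ne_of_ne h1' h2']
  rw [this]
  exact Nat.factorization_prod_pow_eq_self ha

lemma swapN_p (hp : p.Prime) (hq : q.Prime) : swapN p q p = q := by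
  unfold swapN
  rw [hp.factorization, Finsupp.equivMapDomain_single, Equiv.swap_apply_left,
    Finsupp.prod_single_index (pow_zero q), pow_one]

/-- The swap automorphism of `ℕ+`. -/
def swapP (hp : p.Prime) (hq : q.Prime) : ℕ+ ≃* ℕ+ where
  toFun a := ⟨swapN p q a, swapN_pos hp hq a⟩
  invFun a := ⟨swapN p q a, swapN_pos hp hq a⟩
  left_inv a := by
    apply PNat.coe_injective
    exact swapN_swapN hp hq a.ne_zero
  right_inv a := by
    apply PNat.coe_injective
    exact swapN_swapN hp hq a.ne_zero
  map_mul' a b := by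
    apply PNat.coe_injective
    exact swapN_mul hp hq a.ne_zero b.ne_zero

lemma swapP_coe (hp : p.Prime) (hq : q.Prime) (a : ℕ+) :
    ((swapP hp hq a : ℕ+) : ℕ) = swapN p q (a : ℕ) := rfl

lemma swapP_of_not_dvd (hp : p.Prime) (hq : q.Prime) {a : ℕ+}
    (h1 : ¬ p ∣ (a : ℕ)) (h2 : ¬ q ∣ (a : ℕ)) : swapP hp hq a = a := by
  apply PNat.coe_injective
  exact swapN_of_not_dvd hp hq a.ne_zero h1 h2

lemma swapP_p (hp : p.Prime) (hq : q.Prime) :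
    swapP hp hq ⟨p, hp.pos⟩ = ⟨q, hq.pos⟩ := by
  apply PNat.coe_injective
  exact swapN_p hp hq

end
end SkolemAux

namespace SkolemAux
noncomputable section

lemma exists_fresh (F : Finset ℕ) : ∃ q : ℕ, q.Prime ∧ ∀ m ∈ F, 0 < m → ¬ q ∣ m := by
  obtain ⟨q, hq1, hq2⟩ := Nat.exists_infinite_primes ((F.sup id) + 1)
  refine ⟨q, hq2, fun m hm hm0 hdvd => ?_⟩
  have h1 : q ≤ m := Nat.le_of_dvd hm0 hdvd
  have h2 : m ≤ F.sup id := Finset.le_sup (f := id) hm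
  omega

lemma swapP_involutive {p q : ℕ} (hp : p.Prime) (hq : q.Prime) (a : ℕ+) :
    swapP hp hq (swapP hp hq a) = a := by
  apply PNat.coe_injective
  exact swapN_swapN hp hq a.ne_zero

def pexp (p : ℕ) (hp : 0 < p) (b : Bool) : ℕ+ := if b then ⟨p, hp⟩ else 1

@[simp] lemma pexp_true (p : ℕ) (hp : 0 < p) : pexp p hp true = ⟨p, hp⟩ := rfl
@[simp] lemma pexp_false (p : ℕ) (hp : 0 < p) : pexp p hp false = 1 := rfl

@[simp] lemma Formula.realize_iInf' {M : Type*} [Monoid M] {α β : Type*} [Finite β]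
    (f : β → L.Formula α) (v : α → M) :
    Formula.Realize (M := M) (BoundedFormula.iInf f) v ↔ ∀ b, (f b).Realize v :=
  BoundedFormula.realize_iInf

@[simp] lemma Formula.realize_subst' {M : Type*} [Monoid M] {α β : Type*} (φ : L.Formula α)
    (f : α → L.Term β) (v : β → M) :
    Formula.Realize (M := M) (BoundedFormula.subst φ f) v ↔ φ.Realize (fun a => (f a).realize v) :=
  BoundedFormula.realize_subst

/-- The key removal lemma: if `D` is defined by `φ` over parameters `r' i * p^(e i)`
with `p` a prime not dividing any `r' i`, and `D` is also defined by some formula over a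
tuple `c` none of whose entries is divisible by `p`, then `D` is definable over `r'`. -/
lemma removal {n k : ℕ} (D : Set (Fin n → ℕ+)) (φ : L.Formula (Fin n ⊕ Fin k))
    (r' : Fin k → ℕ+) {p : ℕ} (hp : p.Prime) (e : Fin k → Bool)
    (hpr : ∀ i, ¬ p ∣ (r' i : ℕ))
    (hD : D = {a | φ.Realize (Sum.elim a (fun i => r' i * pexp p hp.pos (e i)))})
    {l : ℕ} {c : Fin l → ℕ+} {χ : L.Formula (Fin n ⊕ Fin l)}
    (hχ : D = {a | χ.Realize (Sum.elim a c)})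
    (hpc : ∀ j, ¬ p ∣ (c j : ℕ)) :
    ∃ ψ : L.Formula (Fin n ⊕ Fin k), D = {a | ψ.Realize (Sum.elim a r')} := by
  classical
  have key : ∀ (x : ℕ) (hx : x.Prime), (∀ j, ¬ x ∣ (c j : ℕ)) → (∀ i, ¬ x ∣ (r' i : ℕ)) →
      ∀ b : Fin n → ℕ+,
        (φ.Realize (Sum.elim b (fun i => r' i * pexp x hx.pos (e i))) ↔ b ∈ D) := by
    intro x hx hxc hxr b
    set τ := swapP hp hx with hτ
    have hτc : ∀ j, τ (c j) = c j := fun j => swapP_of_not_dvd hp hx (hpc j) (hxc j)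
    have hDτ : ∀ b' : Fin n → ℕ+, ((fun j => τ (b' j)) ∈ D ↔ b' ∈ D) := by
      intro b'
      rw [hχ]; simp only [Set.mem_setOf_eq]
      have h : Sum.elim (fun j => τ (b' j)) c = fun a => τ (Sum.elim b' c a) := by
        funext a; cases a with
        | inl j => rfl
        | inr j => exact (hτc j).symm
      rw [h, realize_mulEquiv]
    have hτs : ∀ i, τ (r' i * pexp p hp.pos (e i)) = r' i * pexp x hx.pos (e i) := by
      intro i
      rw [map_mul, swapP_of_not_dvd hp hx (hpr i) (hxr i)]
      congr 1
      cases hei : e i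
      · simp only [pexp_false]; exact map_one τ
      · simp only [pexp_true]; exact swapP_p hp hx
    set b₀ : Fin n → ℕ+ := fun j => τ (b j) with hb₀
    have hbb : b = fun j => τ (b₀ j) := by
      funext j; exact (swapP_involutive hp hx (b j)).symm
    have h1 : Sum.elim b (fun i => r' i * pexp x hx.pos (e i))
        = fun a => τ (Sum.elim b₀ (fun i => r' i * pexp p hp.pos (e i)) a) := by
      funext a; cases a with
      | inl j =>
        conv_lhs => rw [hbb]
        rfl
      | inr i => exact (hτs i).symm
    rw [h1, realize_mulEquiv]
    have h2 : b₀ ∈ D ↔ b ∈ D := by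
      conv_rhs => rw [hbb]
      exact (hDτ b₀).symm
    rw [hD] at h2 ⊢
    simpa using h2
  -- Step 2: construct the formula over r'.
  let X : L.Term ((Fin n ⊕ Fin k) ⊕ Unit) := Term.var (Sum.inr ())
  let V : Fin n → L.Term ((Fin n ⊕ Fin k) ⊕ Unit) := fun j => Term.var (Sum.inl (Sum.inl j))
  let W : Fin k → L.Term ((Fin n ⊕ Fin k) ⊕ Unit) := fun i => Term.var (Sum.inl (Sum.inr i))
  let body : L.Formula ((Fin n ⊕ Fin k) ⊕ Unit) :=
    primeF X ⊓ ((BoundedFormula.iInf fun i : Fin k => (dvdF X (W i)).not)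
      ⊓ ((BoundedFormula.iInf fun j : Fin n => (dvdF X (V j)).not)
      ⊓ φ.subst (Sum.elim (fun j => V j) (fun i => if e i then tmul (W i) X else W i))))
  refine ⟨Formula.iExs Unit body, ?_⟩
  have hbody : ∀ (a : Fin n → ℕ+) (z : Unit → ℕ+),
      (body.Realize (fun a0 => Sum.elim (Sum.elim a r') z (id a0)) ↔
        (((z () : ℕ+) : ℕ).Prime ∧ (∀ i', ¬ (z () ∣ r' i')) ∧ (∀ j, ¬ (z () ∣ a j)) ∧
          φ.Realize (Sum.elim a (fun i' => if e i' then r' i' * z () else r' i')))) := by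
    intro a z
    simp only [body, X, V, W, Formula.realize_inf, Formula.realize_not, realize_primeF,
      realize_dvdF, Formula.realize_iInf', Formula.realize_subst', Finset.mem_univ,
      forall_const, id, Term.realize_var, Sum.elim_inl, Sum.elim_inr]
    refine and_congr Iff.rfl (and_congr Iff.rfl (and_congr Iff.rfl ?_))
    have hfun : (fun a0 : Fin n ⊕ Fin k =>
        Term.realize (fun a1 => Sum.elim (Sum.elim a r') z a1)
          (Sum.elim (fun j => (Term.var (Sum.inl (Sum.inl j)) : L.Term ((Fin n ⊕ Fin k) ⊕ Unit)))
            (fun i => if e i = true then tmul (Term.var (Sum.inl (Sum.inr i)))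
              (Term.var (Sum.inr ())) else Term.var (Sum.inl (Sum.inr i))) a0))
        = Sum.elim a (fun i' => if e i' = true then r' i' * z () else r' i') := by
      funext a0
      cases a0 with
      | inl j => simp
      | inr i => by_cases h : e i <;> simp [h]
    rw [hfun]
  ext a
  rw [Set.mem_setOf_eq, Formula.realize_iExs]
  constructor
  · -- a ∈ D : produce a fresh prime witness
    intro haD
    obtain ⟨x, hx, hxn⟩ := exists_fresh
      ((Finset.univ.image fun j => (c j : ℕ)) ∪ (Finset.univ.image fun i => (r' i : ℕ))
        ∪ (Finset.univ.image fun j => (a j : ℕ)))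
    have hxc : ∀ j, ¬ x ∣ (c j : ℕ) := fun j =>
      hxn _ (by simp [Finset.mem_union]) (c j).pos
    have hxr : ∀ i, ¬ x ∣ (r' i : ℕ) := fun i =>
      hxn _ (by simp [Finset.mem_union]) (r' i).pos
    have hxa : ∀ j, ¬ x ∣ (a j : ℕ) := fun j =>
      hxn _ (by simp [Finset.mem_union]) (a j).pos
    refine ⟨fun _ => ⟨x, hx.pos⟩, (hbody a _).2 ⟨hx, ?_, ?_, ?_⟩⟩
    · intro i'
      exact fun hd => hxr i' (PNat.dvd_iff.1 hd)
    · intro j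
      exact fun hd => hxa j (PNat.dvd_iff.1 hd)
    · have := (key x hx hxc hxr a).2 haD
      convert this using 2
      funext i'
      cases hei : e i' <;> simp [pexp, hei]
  · rintro ⟨z, hz⟩
    obtain ⟨hzp, hzr, hza, hzφ⟩ := (hbody a z).1 hz
    set x : ℕ := (z () : ℕ) with hxdef
    have hx : x.Prime := hzp
    have hxr : ∀ i, ¬ x ∣ (r' i : ℕ) := by
      intro i hdvd
      exact hzr i (PNat.dvd_iff.2 hdvd)
    have hxa : ∀ j, ¬ x ∣ (a j : ℕ) := by
      intro j hdvd
      exact hza j (PNat.dvd_iff.2 hdvd)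
    have hzeq : (z () : ℕ+) = ⟨x, hx.pos⟩ := by
      apply PNat.coe_injective; rfl
    have hφx : φ.Realize (Sum.elim a (fun i => r' i * pexp x hx.pos (e i))) := by
      convert hzφ using 2
      funext i'
      cases hei : e i' <;> simp [pexp, hei, hzeq]
    by_cases hxc : ∀ j, ¬ x ∣ (c j : ℕ)
    · exact (key x hx hxc hxr a).1 hφx
    · -- x divides some c j: move to a fresh prime q via the swap x ↔ q
      obtain ⟨q, hq, hqn⟩ := exists_fresh
        (((Finset.univ.image fun j => (c j : ℕ)) ∪ (Finset.univ.image fun i => (r' i : ℕ))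
          ∪ (Finset.univ.image fun j => (a j : ℕ))) ∪ {p})
      have hqc : ∀ j, ¬ q ∣ (c j : ℕ) := fun j =>
        hqn _ (by simp [Finset.mem_union]) (c j).pos
      have hqr : ∀ i, ¬ q ∣ (r' i : ℕ) := fun i =>
        hqn _ (by simp [Finset.mem_union]) (r' i).pos
      have hqa : ∀ j, ¬ q ∣ (a j : ℕ) := fun j =>
        hqn _ (by simp [Finset.mem_union]) (a j).pos
      set σ := swapP hx hq with hσ
      have hσa : ∀ j, σ (a j) = a j := fun j => swapP_of_not_dvd hx hq (hxa j) (hqa j)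
      have hσs : ∀ i, σ (r' i * pexp x hx.pos (e i)) = r' i * pexp q hq.pos (e i) := by
        intro i
        rw [map_mul, swapP_of_not_dvd hx hq (hxr i) (hqr i)]
        congr 1
        cases hei : e i
        · simp only [pexp_false]; exact map_one σ
        · simp only [pexp_true]; exact swapP_p hx hq
      have h1 : (fun a0 => σ (Sum.elim a (fun i => r' i * pexp x hx.pos (e i)) a0))
          = Sum.elim a (fun i => r' i * pexp q hq.pos (e i)) := by
        funext a0; cases a0 with
        | inl j => exact hσa j
        | inr i => exact hσs i
      have hφq : φ.Realize (Sum.elim a (fun i => r' i * pexp q hq.pos (e i))) := by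
        rw [← h1, realize_mulEquiv]
        exact hφx
      exact (key q hq hqc hqr a).1 hφq


end
end SkolemAux

namespace SkolemAux
noncomputable section
open Finset

def suppF {k : ℕ} (s : Fin k → ℕ+) : Finset ℕ :=
  Finset.univ.biUnion fun i => ((s i : ℕ)).primeFactors

lemma mem_suppF {k : ℕ} {s : Fin k → ℕ+} {p : ℕ} :
    p ∈ suppF s ↔ p.Prime ∧ ∃ i, p ∣ (s i : ℕ) := by
  simp only [suppF, Finset.mem_biUnion, Finset.mem_univ, true_and, Nat.mem_primeFactors]
  constructor
  · rintro ⟨i, h1, h2, _⟩; exact ⟨h1, i, h2⟩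
  · rintro ⟨h1, i, h2⟩; exact ⟨i, h1, h2, (s i).ne_zero⟩

lemma sqf_iff (r : ℕ+) : Sqf r ↔ Squarefree (r : ℕ) := by
  rw [Nat.squarefree_iff_prime_squarefree]
  constructor
  · intro h x hx hdvd
    refine h ⟨x, hx.pos⟩ hx (PNat.dvd_iff.2 ?_)
    exact hdvd
  · intro h x hx hdvd
    refine h (x : ℕ) hx ?_
    have := PNat.dvd_iff.1 hdvd
    simpa using this

lemma sqf_of_prime {x : ℕ+} (h : (x : ℕ).Prime) : Sqf x :=
  (sqf_iff x).2 h.squarefree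

/-- The base case: the support of `s` is contained in the support of every defining tuple. -/
lemma base {n k : ℕ} (D : Set (Fin n → ℕ+)) (φ : L.Formula (Fin n ⊕ Fin k))
    (s : Fin k → ℕ+) (hs : ∀ i, Sqf (s i))
    (hD : D = {a | φ.Realize (Sum.elim a s)})
    (hmin : ∀ (l : ℕ) (c : Fin l → ℕ+) (χ : L.Formula (Fin n ⊕ Fin l)),
        D = {a | χ.Realize (Sum.elim a c)} → ∀ p ∈ suppF s, p ∈ PSupp c) :
    ∃ (m : ℕ) (r : Fin m → ℕ+),
      (∀ i, Sqf (r i)) ∧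
      (∀ i j, i ≠ j → Nat.Coprime (r i : ℕ) (r j : ℕ)) ∧
      (∃ ψ : L.Formula (Fin n ⊕ Fin m), D = {a | ψ.Realize (Sum.elim a r)}) ∧
      (∀ (l : ℕ) (c : Fin l → ℕ+) (χ : L.Formula (Fin n ⊕ Fin l)),
        D = {a | χ.Realize (Sum.elim a c)} → PSupp r ⊆ PSupp c) := by
  classical
  set F : Finset ℕ := suppF s with hF
  set m := F.card with hm
  set oe := F.orderIsoOfFin rfl with hoe
  have hprime : ∀ j : Fin m, ((oe j : ℕ)).Prime := fun j => (mem_suppF.1 (oe j).2).1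
  set r : Fin m → ℕ+ := fun j => ⟨(oe j : ℕ), (hprime j).pos⟩ with hr
  have hrprime : ∀ j, ((r j : ℕ+) : ℕ).Prime := hprime
  have hrinj : Function.Injective fun j => ((r j : ℕ+) : ℕ) := by
    intro i j hij
    have : (oe i : ℕ) = (oe j : ℕ) := hij
    exact oe.injective (Subtype.ext this)
  refine ⟨m, r, fun j => sqf_of_prime (hrprime j), ?_, ?_, ?_⟩
  · intro i j hij
    exact (Nat.coprime_primes (hrprime i) (hrprime j)).2 fun h => hij (hrinj h)
  · -- definability over r
    have hprod : ∀ i, (Finset.univ.filter fun j => ((r j : ℕ+) : ℕ) ∣ (s i : ℕ)).prod r = s i := by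
      intro i
      apply PNat.coe_injective
      have hcoe : (((Finset.univ.filter fun j => ((r j : ℕ+) : ℕ) ∣ (s i : ℕ)).prod r : ℕ+) : ℕ)
          = (Finset.univ.filter fun j => ((r j : ℕ+) : ℕ) ∣ (s i : ℕ)).prod
              (fun j => ((r j : ℕ+) : ℕ)) :=
        map_prod PNat.coeMonoidHom _ _
      rw [hcoe]
      have hbij : (Finset.univ.filter fun j => ((r j : ℕ+) : ℕ) ∣ (s i : ℕ)).prod
          (fun j => ((r j : ℕ+) : ℕ)) = ((s i : ℕ)).primeFactors.prod (fun x => x) := by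
        refine Finset.prod_bij (fun j _ => ((r j : ℕ+) : ℕ)) ?_ ?_ ?_ ?_
        · intro j hj
          rw [Finset.mem_filter] at hj
          exact Nat.mem_primeFactors.2 ⟨hrprime j, hj.2, (s i).ne_zero⟩
        · intro j1 h1 j2 h2 h
          exact hrinj h
        · intro x hx
          rw [Nat.mem_primeFactors] at hx
          have hxF : x ∈ F := mem_suppF.2 ⟨hx.1, i, hx.2.1⟩
          refine ⟨oe.symm ⟨x, hxF⟩, ?_, ?_⟩
          · rw [Finset.mem_filter]
            refine ⟨Finset.mem_univ _, ?_⟩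
            have h1 : ((r (oe.symm ⟨x, hxF⟩) : ℕ+) : ℕ)
                = ((oe (oe.symm ⟨x, hxF⟩) : ℕ)) := rfl
            rw [h1, oe.apply_symm_apply]
            exact hx.2.1
          · show ((r (oe.symm ⟨x, hxF⟩) : ℕ+) : ℕ) = x
            have h1 : ((r (oe.symm ⟨x, hxF⟩) : ℕ+) : ℕ)
                = ((oe (oe.symm ⟨x, hxF⟩) : ℕ)) := rfl
            rw [h1, oe.apply_symm_apply]
        · intro j hj; rfl
      rw [hbij]
      exact Nat.prod_primeFactors_of_squarefree ((sqf_iff (s i)).1 (hs i))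
    refine ⟨φ.subst (Sum.elim (fun j => Term.var (Sum.inl j))
      (fun i => tprod (((Finset.univ.filter fun j => ((r j : ℕ+) : ℕ) ∣ (s i : ℕ))).toList.map
        fun j => Term.var (Sum.inr j)))), ?_⟩
    rw [hD]
    ext a
    simp only [Set.mem_setOf_eq, Formula.realize_subst']
    have hfun : (fun a0 : Fin n ⊕ Fin k =>
        Term.realize (Sum.elim a r)
          ((Sum.elim (fun j => (Term.var (Sum.inl j) : L.Term (Fin n ⊕ Fin m)))
            (fun i => tprod (((Finset.univ.filter fun j => ((r j : ℕ+) : ℕ) ∣ (s i : ℕ))).toList.map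
              fun j => Term.var (Sum.inr j)))) a0)) = Sum.elim a s := by
      funext a0
      cases a0 with
      | inl j => simp
      | inr i =>
        simp only [Sum.elim_inr, realize_tprod, List.map_map]
        have : ((Finset.univ.filter fun j => ((r j : ℕ+) : ℕ) ∣ (s i : ℕ)).toList.map
            ((fun t : L.Term (Fin n ⊕ Fin m) => t.realize (Sum.elim a r)) ∘
              (fun j => Term.var (Sum.inr j)))).prod
            = (Finset.univ.filter fun j => ((r j : ℕ+) : ℕ) ∣ (s i : ℕ)).prod r := by
          rw [← Finset.prod_map_toList]
          rfl
        rw [this, hprod]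
    rw [hfun]
  · intro l c χ hχ pp hpp
    obtain ⟨hpp1, j, hppj⟩ := hpp
    have : pp = ((r j : ℕ+) : ℕ) := ((Nat.prime_dvd_prime_iff_eq hpp1 (hrprime j)).1 hppj)
    subst this
    exact hmin l c χ hχ _ (oe j).2

end
end SkolemAux

namespace SkolemAux
noncomputable section

lemma main {n : ℕ} : ∀ (N k : ℕ) (s : Fin k → ℕ+), (∀ i, Sqf (s i)) → (suppF s).card ≤ N →
    ∀ (D : Set (Fin n → ℕ+)) (φ : L.Formula (Fin n ⊕ Fin k)),
      D = {a | φ.Realize (Sum.elim a s)} →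
    ∃ (m : ℕ) (r : Fin m → ℕ+),
      (∀ i, Sqf (r i)) ∧
      (∀ i j, i ≠ j → Nat.Coprime (r i : ℕ) (r j : ℕ)) ∧
      (∃ ψ : L.Formula (Fin n ⊕ Fin m), D = {a | ψ.Realize (Sum.elim a r)}) ∧
      (∀ (l : ℕ) (c : Fin l → ℕ+) (χ : L.Formula (Fin n ⊕ Fin l)),
        D = {a | χ.Realize (Sum.elim a c)} → PSupp r ⊆ PSupp c) := by
  intro N
  induction N with
  | zero =>
    intro k s hs hcard D φ hD
    refine base D φ s hs hD ?_
    intro l c χ hχ p hp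
    rw [Nat.le_zero, Finset.card_eq_zero] at hcard
    rw [hcard] at hp
    exact absurd hp (Finset.notMem_empty p)
  | succ N ih =>
    intro k s hs hcard D φ hD
    by_cases hmin : ∀ (l : ℕ) (c : Fin l → ℕ+) (χ : L.Formula (Fin n ⊕ Fin l)),
        D = {a | χ.Realize (Sum.elim a c)} → ∀ p ∈ suppF s, p ∈ PSupp c
    · exact base D φ s hs hD hmin
    · push_neg at hmin
      obtain ⟨l, c, χ, hχ, p, hpF, hpc⟩ := hmin
      have hp : p.Prime := (mem_suppF.1 hpF).1
      have hpc' : ∀ j, ¬ p ∣ (c j : ℕ) := fun j hdvd => hpc ⟨hp, j, hdvd⟩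
      classical
      set e : Fin k → Bool := fun i => decide (p ∣ (s i : ℕ)) with he
      set r' : Fin k → ℕ+ := fun i =>
        if h : p ∣ (s i : ℕ) then ⟨(s i : ℕ) / p, Nat.div_pos (Nat.le_of_dvd (s i).pos h) hp.pos⟩
        else s i with hr'
      have hr'dvd : ∀ i, ((r' i : ℕ+) : ℕ) ∣ (s i : ℕ) := by
        intro i
        by_cases h : p ∣ (s i : ℕ)
        · rw [show ((r' i : ℕ+) : ℕ) = (s i : ℕ) / p from congrArg PNat.val (dif_pos h)]
          exact Nat.div_dvd_of_dvd h
        · rw [show ((r' i : ℕ+) : ℕ) = (s i : ℕ) from congrArg PNat.val (dif_neg h)]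
      have hpr' : ∀ i, ¬ p ∣ ((r' i : ℕ+) : ℕ) := by
        intro i
        by_cases h : p ∣ (s i : ℕ)
        · rw [show ((r' i : ℕ+) : ℕ) = (s i : ℕ) / p from congrArg PNat.val (dif_pos h)]
          intro hdvd
          rw [Nat.dvd_div_iff_mul_dvd h] at hdvd
          have hsq := hs i ⟨p, hp.pos⟩ hp
          refine hsq (PNat.dvd_iff.2 ?_)
          exact hdvd
        · rw [show ((r' i : ℕ+) : ℕ) = (s i : ℕ) from congrArg PNat.val (dif_neg h)]
          exact h
      have hsr : ∀ i, s i = r' i * pexp p hp.pos (e i) := by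
        intro i
        by_cases h : p ∣ (s i : ℕ)
        · have hei : e i = true := by simp [he, h]
          apply PNat.coe_injective
          rw [hei]
          rw [pexp_true]; show (s i : ℕ) = (r' i : ℕ) * p; rw [show ((r' i : ℕ+) : ℕ) = (s i : ℕ) / p from congrArg PNat.val (dif_pos h)]
          exact (Nat.div_mul_cancel h).symm
        · have hei : e i = false := by simp [he, h]
          rw [hei]
          rw [pexp_false, mul_one]; exact Eq.symm (dif_neg h)
      have hsqf' : ∀ i, Sqf (r' i) := by
        intro i
        rw [sqf_iff]
        exact Squarefree.squarefree_of_dvd (hr'dvd i) ((sqf_iff (s i)).1 (hs i))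
      have hsupp : suppF r' ⊆ (suppF s).erase p := by
        intro x hx
        obtain ⟨hx1, i, hx2⟩ := mem_suppF.1 hx
        rw [Finset.mem_erase]
        constructor
        · rintro rfl; exact hpr' i hx2
        · exact mem_suppF.2 ⟨hx1, i, hx2.trans (hr'dvd i)⟩
      have hcard' : (suppF r').card ≤ N := by
        have h1 := Finset.card_le_card hsupp
        have h2 := Finset.card_erase_of_mem hpF
        omega
      have hD' : D = {a | φ.Realize (Sum.elim a (fun i => r' i * pexp p hp.pos (e i)))} := by
        rw [hD]
        have : s = fun i => r' i * pexp p hp.pos (e i) := funext hsr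
        rw [← this]
      obtain ⟨ψ, hψ⟩ := removal D φ r' hp e hpr' hD' hχ hpc'
      exact ih k r' hsqf' hcard' D ψ hψ

end
end SkolemAux

/-- A set definable over a squarefree tuple is definable over a tuple of pairwise coprime
squarefree elements whose support is least among supports of defining tuples. -/
theorem definable_over_coprime_radicals (n k : ℕ) (D : Set (Fin n → ℕ+))
    (s : Fin k → ℕ+) (hs : ∀ i, Sqf (s i))
    (hdef : ∃ φ : L.Formula (Fin n ⊕ Fin k), D = {a | φ.Realize (Sum.elim a s)}) :
    ∃ (m : ℕ) (r : Fin m → ℕ+),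
      (∀ i, Sqf (r i)) ∧
      (∀ i j, i ≠ j → Nat.Coprime (r i : ℕ) (r j : ℕ)) ∧
      (∃ ψ : L.Formula (Fin n ⊕ Fin m), D = {a | ψ.Realize (Sum.elim a r)}) ∧
      (∀ (l : ℕ) (c : Fin l → ℕ+) (χ : L.Formula (Fin n ⊕ Fin l)),
        D = {a | χ.Realize (Sum.elim a c)} → PSupp r ⊆ PSupp c) := by
  obtain ⟨φ, hφ⟩ := hdef
  exact SkolemAux.main (SkolemAux.suppF s).card k s hs le_rfl D φ hφ
end

section
/- Let D ⊆ (ℕ⁺)ⁿ and let r̄ = (r₁,…,r_m) ∈ (ℕ⁺)^m be a tuple such that: each rᵢ is squarefree; rᵢ and r_j are coprime for all i ≠ j; D is definable over r̄; σ(r̄) ⊆ σ(c̄) for every tuple c̄ over which D is definable; and m is least possible among all tuples satisfying these conditions. Then every monoid automorphism f of ℕ⁺ whose componentwise action on (ℕ⁺)ⁿ maps D onto D permutes the rᵢ: there is a permutation τ of {1,…,m} with f(rᵢ) = r_{τ(i)} for all i. -/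
open FirstOrder Language

/-- `r̄` is a tuple of pairwise coprime squarefree elements over which `D` is definable,
whose support is contained in the support of every defining tuple for `D`. -/
def GoodTuple (n : ℕ) (D : Set (Fin n → ℕ+)) {m : ℕ} (r : Fin m → ℕ+) : Prop :=
  (∀ i, Sqf (r i)) ∧
  (∀ i j, i ≠ j → Nat.Coprime (r i : ℕ) (r j : ℕ)) ∧
  (∃ ψ : L.Formula (Fin n ⊕ Fin m), D = {a | ψ.Realize (Sum.elim a r)}) ∧
  (∀ (l : ℕ) (c : Fin l → ℕ+) (χ : L.Formula (Fin n ⊕ Fin l)),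
    D = {a | χ.Realize (Sum.elim a c)} → PSupp r ⊆ PSupp c)

section AuxSkolem

namespace Skolem

/-- one as a term -/
def tone {α : Type*} : L.Term α := Term.func (l := 0) (Unit.unit) ![]

def tmul {α : Type*} (t₁ t₂ : L.Term α) : L.Term α := Term.func (l := 2) (Unit.unit) ![t₁, t₂]

@[simp] lemma realize_tone {M : Type*} [Monoid M] {α : Type*} (v : α → M) :
    (tone (α := α)).realize v = 1 := rfl

@[simp] lemma realize_tmul {M : Type*} [Monoid M] {α : Type*} (t₁ t₂ : L.Term α) (v : α → M) :
    (tmul t₁ t₂).realize v = t₁.realize v * t₂.realize v := rfl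

/-- `L`-equivalence from a `MulEquiv`. -/
def toLEquiv (e : ℕ+ ≃* ℕ+) : ℕ+ ≃[L] ℕ+ where
  toEquiv := e.toEquiv
  map_fun' := by
    intro k f x
    match k, f with
    | 0, f => exact map_one e
    | 2, f => exact map_mul e _ _
  map_rel' := by intro k f; exact f.elim

lemma realize_mulEquiv (e : ℕ+ ≃* ℕ+) {α : Type*} (φ : L.Formula α) (v : α → ℕ+) :
    φ.Realize (fun i => e (v i)) ↔ φ.Realize v := by
  have := StrongHomClass.realize_formula (toLEquiv e) φ (v := v)
  exact this

end Skolem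

namespace Skolem

def supp (x : ℕ+) : Finset Nat.Primes :=
  Multiset.toFinset (x.factorMultiset : Multiset Nat.Primes)

def sprod (S : Finset Nat.Primes) : ℕ+ := ∏ p ∈ S, (p : ℕ+)

lemma sprod_eq_primeMultisetProd (S : Finset Nat.Primes) :
    sprod S = PrimeMultiset.prod (S.val : Multiset Nat.Primes) := rfl

lemma factorMultiset_sprod (S : Finset Nat.Primes) :
    (sprod S).factorMultiset = (S.val : Multiset Nat.Primes) := by
  erw [sprod_eq_primeMultisetProd, PrimeMultiset.factorMultiset_prod]

lemma supp_sprod (S : Finset Nat.Primes) : supp (sprod S) = S := by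
  rw [supp, factorMultiset_sprod]
  exact S.val_toFinset

lemma mem_supp {q : Nat.Primes} {x : ℕ+} : q ∈ supp x ↔ (q : ℕ+) ∣ x := by
  erw [supp, Multiset.mem_toFinset, ← Multiset.one_le_count_iff_mem,
    ← PNat.count_factorMultiset, pow_one]

lemma factorMultiset_injective : Function.Injective PNat.factorMultiset := by
  intro a b h
  have := congrArg PrimeMultiset.prod h
  rwa [PNat.prod_factorMultiset, PNat.prod_factorMultiset] at this

lemma sprod_supp_eq {x : ℕ+} (h : (x.factorMultiset : Multiset Nat.Primes).Nodup) :
    sprod (supp x) = x := by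
  apply factorMultiset_injective
  erw [factorMultiset_sprod, supp, Multiset.toFinset_val]
  exact Multiset.dedup_eq_self.2 h

lemma nodup_factorMultiset_sprod (S : Finset Nat.Primes) :
    ((sprod S).factorMultiset : Multiset Nat.Primes).Nodup := by
  rw [factorMultiset_sprod]; exact S.nodup

lemma supp_mul (x y : ℕ+) : supp (x * y) = supp x ∪ supp y := by
  rw [supp, supp, supp, PNat.factorMultiset_mul]
  exact Multiset.toFinset_add _ _

lemma supp_one : supp 1 = ∅ := by
  rw [supp, PNat.factorMultiset_one]
  rfl

end Skolem

namespace Skolem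

lemma coe_primes_prime (q : Nat.Primes) : (((q : ℕ+) : ℕ)).Prime := by
  rw [Nat.Primes.coe_pnat_nat]; exact q.property

lemma sqf_iff_nodup {x : ℕ+} :
    Sqf x ↔ (x.factorMultiset : Multiset Nat.Primes).Nodup := by
  erw [Multiset.nodup_iff_count_le_one]
  constructor
  · intro h q
    by_contra hc
    push_neg at hc
    have h2 : (q : ℕ+) ^ 2 ∣ x := (PNat.count_factorMultiset x q 2).2 hc
    rw [pow_two] at h2
    exact h q (coe_primes_prime q) h2
  · intro h p hp hd
    set q : Nat.Primes := ⟨(p : ℕ), hp⟩ with hqdef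
    have hq : (q : ℕ+) = p := by
      apply PNat.coe_injective
      rw [Nat.Primes.coe_pnat_nat]
    have h2 : (q : ℕ+) ^ 2 ∣ x := by
      rw [hq, pow_two]; exact hd
    have := (PNat.count_factorMultiset x _ 2).1 h2
    exact absurd (le_trans this (h _)) (by norm_num)

lemma sqf_sprod (S : Finset Nat.Primes) : Sqf (sprod S) :=
  sqf_iff_nodup.2 (nodup_factorMultiset_sprod S)

lemma sprod_supp {x : ℕ+} (h : Sqf x) : sprod (supp x) = x :=
  sprod_supp_eq (sqf_iff_nodup.1 h)

lemma disjoint_supp_of_coprime {x y : ℕ+} (h : Nat.Coprime (x : ℕ) (y : ℕ)) :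
    Disjoint (supp x) (supp y) := by
  rw [Finset.disjoint_left]
  intro q hx hy
  rw [mem_supp, PNat.dvd_iff] at hx hy
  have hg : ((q : ℕ+) : ℕ) ∣ Nat.gcd (x : ℕ) (y : ℕ) := Nat.dvd_gcd hx hy
  rw [Nat.Coprime] at h
  rw [h] at hg
  have := Nat.eq_one_of_dvd_one hg
  rw [Nat.Primes.coe_pnat_nat] at this
  exact q.property.one_lt.ne' this

lemma coprime_of_disjoint_supp {x y : ℕ+} (h : Disjoint (supp x) (supp y)) :
    Nat.Coprime (x : ℕ) (y : ℕ) := by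
  by_contra hc
  obtain ⟨p, hp, hd⟩ := Nat.exists_prime_and_dvd hc
  set q : Nat.Primes := ⟨p, hp⟩ with hq
  have hqx : q ∈ supp x := by
    rw [mem_supp, PNat.dvd_iff, Nat.Primes.coe_pnat_nat]
    exact hd.trans (Nat.gcd_dvd_left _ _)
  have hqy : q ∈ supp y := by
    rw [mem_supp, PNat.dvd_iff, Nat.Primes.coe_pnat_nat]
    exact hd.trans (Nat.gcd_dvd_right _ _)
  exact Finset.disjoint_left.1 h hqx hqy

lemma sqf_mul {x y : ℕ+} (hx : Sqf x) (hy : Sqf y) (h : Disjoint (supp x) (supp y)) :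
    Sqf (x * y) := by
  rw [sqf_iff_nodup] at hx hy ⊢
  rw [PNat.factorMultiset_mul]
  refine Multiset.Nodup.add_iff hx hy |>.2 ?_
  erw [Multiset.disjoint_left]
  intro a hax hay
  exact Finset.disjoint_left.1 h (Multiset.mem_toFinset.2 hax) (Multiset.mem_toFinset.2 hay)

/-- characterization of primality in `ℕ+` by multiplicative structure. -/
lemma pnat_prime_iff (x : ℕ+) :
    (x : ℕ).Prime ↔ x ≠ 1 ∧ ∀ a b : ℕ+, x = a * b → a = 1 ∨ b = 1 := by
  constructor
  · intro hp
    constructor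
    · intro h
      rw [h] at hp
      exact Nat.not_prime_one (by simpa using hp)
    intro a b hab
    have ha : (a : ℕ) ∣ (x : ℕ) := by
      rw [hab]; exact Dvd.intro _ (by rw [PNat.mul_coe, mul_comm])
    rcases (Nat.Prime.eq_one_or_self_of_dvd hp _ ha) with h1 | h2
    · left; exact PNat.coe_injective (by simp [h1])
    · right
      have hax : a = x := PNat.coe_injective h2
      rw [hax] at hab
      have : x * 1 = x * b := by rw [mul_one]; exact hab
      exact (mul_left_cancel this).symm
  · rintro ⟨h1, h2⟩
    rw [Nat.prime_def]
    constructor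
    · rcases lt_or_ge (x : ℕ) 2 with h | h
      · have hx1 : (x : ℕ) = 1 := by have := x.ne_zero; omega
        exact absurd (PNat.coe_injective (by rw [hx1, PNat.one_coe])) h1
      · exact h
    · intro m hm
      obtain ⟨c, hc⟩ := hm
      have hm0 : 0 < m := by
        rcases Nat.eq_zero_or_pos m with h | h
        · rw [h, zero_mul] at hc; exact absurd hc x.ne_zero
        · exact h
      have hc0 : 0 < c := by
        rcases Nat.eq_zero_or_pos c with h | h
        · rw [h, mul_zero] at hc; exact absurd hc x.ne_zero
        · exact h
      have hx : x = (⟨m, hm0⟩ : ℕ+) * (⟨c, hc0⟩ : ℕ+) := by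
        apply PNat.coe_injective; exact hc
      rcases h2 _ _ hx with h | h
      · left
        have := congrArg (fun z : ℕ+ => (z : ℕ)) h
        simpa using this
      · right
        rw [h] at hx
        rw [hx]
        exact (Nat.mul_one m).symm

end Skolem

namespace Skolem

/-- automorphism of `ℕ+` induced by a permutation of the primes. -/
def hat (g : Equiv.Perm Nat.Primes) : ℕ+ ≃* ℕ+ where
  toFun x := PrimeMultiset.prod (Multiset.map g (x.factorMultiset : Multiset Nat.Primes))
  invFun x := PrimeMultiset.prod (Multiset.map g.symm (x.factorMultiset : Multiset Nat.Primes))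
  left_inv x := by
    show PrimeMultiset.prod (Multiset.map g.symm ((PrimeMultiset.prod (Multiset.map g (x.factorMultiset : Multiset Nat.Primes))).factorMultiset : Multiset Nat.Primes)) = x
    have h : ((PrimeMultiset.prod (Multiset.map g (x.factorMultiset : Multiset Nat.Primes))).factorMultiset : Multiset Nat.Primes)
        = Multiset.map g (x.factorMultiset : Multiset Nat.Primes) :=
      PrimeMultiset.factorMultiset_prod _
    erw [h, Multiset.map_map, Equiv.symm_comp_self, Multiset.map_id]
    exact PNat.prod_factorMultiset x
  right_inv x := by
    show PrimeMultiset.prod (Multiset.map g ((PrimeMultiset.prod (Multiset.map g.symm (x.factorMultiset : Multiset Nat.Primes))).factorMultiset : Multiset Nat.Primes)) = x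
    have h : ((PrimeMultiset.prod (Multiset.map g.symm (x.factorMultiset : Multiset Nat.Primes))).factorMultiset : Multiset Nat.Primes)
        = Multiset.map g.symm (x.factorMultiset : Multiset Nat.Primes) :=
      PrimeMultiset.factorMultiset_prod _
    erw [h, Multiset.map_map, Equiv.self_comp_symm, Multiset.map_id]
    exact PNat.prod_factorMultiset x
  map_mul' x y := by
    show PrimeMultiset.prod (Multiset.map g (((x * y).factorMultiset : Multiset Nat.Primes)))
        = PrimeMultiset.prod (Multiset.map g ((x.factorMultiset : Multiset Nat.Primes)))
          * PrimeMultiset.prod (Multiset.map g ((y.factorMultiset : Multiset Nat.Primes)))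
    rw [PNat.factorMultiset_mul]
    rw [show ((x.factorMultiset + y.factorMultiset : PrimeMultiset) : Multiset Nat.Primes)
        = (x.factorMultiset : Multiset Nat.Primes) + (y.factorMultiset : Multiset Nat.Primes) from rfl]
    erw [Multiset.map_add]
    exact PrimeMultiset.prod_add _ _

lemma hat_prime (g : Equiv.Perm Nat.Primes) (p : Nat.Primes) :
    hat g (p : ℕ+) = ((g p : Nat.Primes) : ℕ+) := by
  show PrimeMultiset.prod (Multiset.map g ((p : ℕ+).factorMultiset : Multiset Nat.Primes)) = _
  rw [PNat.factorMultiset_ofPrime]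
  show PrimeMultiset.prod (Multiset.map g ({p} : Multiset Nat.Primes)) = _
  rw [Multiset.map_singleton]
  exact PrimeMultiset.prod_ofPrime (g p)

lemma hat_mul_apply (g₁ g₂ : Equiv.Perm Nat.Primes) (z : ℕ+) :
    hat (g₁ * g₂) z = hat g₁ (hat g₂ z) := by
  show PrimeMultiset.prod (Multiset.map (g₁ * g₂) (z.factorMultiset : Multiset Nat.Primes)) = PrimeMultiset.prod (Multiset.map g₁ ((hat g₂ z).factorMultiset : Multiset Nat.Primes))
  have h : ((hat g₂ z).factorMultiset : Multiset Nat.Primes)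
      = Multiset.map g₂ (z.factorMultiset : Multiset Nat.Primes) :=
    PrimeMultiset.factorMultiset_prod _
  erw [h, Multiset.map_map]
  rfl

lemma hat_sprod (g : Equiv.Perm Nat.Primes) (S : Finset Nat.Primes) :
    hat g (sprod S) = sprod (S.image g) := by
  rw [sprod, map_prod, sprod, Finset.prod_image (fun a _ b _ h => g.injective h)]
  exact Finset.prod_congr rfl (fun p _ => hat_prime g p)

/-- a permutation preserving the support of a squarefree number fixes it. -/
lemma hat_fix {g : Equiv.Perm Nat.Primes} {z : ℕ+} (hz : Sqf z)
    (h : ∀ p ∈ supp z, g p ∈ supp z) : hat g z = z := by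
  conv_lhs => rw [← sprod_supp hz]
  rw [hat_sprod]
  have himg : (supp z).image g = supp z := by
    apply Finset.eq_of_subset_of_card_le
    · intro q hq
      obtain ⟨p, hp, rfl⟩ := Finset.mem_image.1 hq
      exact h p hp
    · rw [Finset.card_image_of_injective _ g.injective]
  rw [himg, sprod_supp hz]

/-- the prime permutation induced by a `MulEquiv` of `ℕ+`. -/
lemma mulEquiv_coe_prime (e : ℕ+ ≃* ℕ+) (p : Nat.Primes) : ((e (p : ℕ+) : ℕ+) : ℕ).Prime := by
  rw [pnat_prime_iff]
  constructor
  · intro h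
    have := e.injective (h.trans (map_one e).symm)
    have h2 := coe_primes_prime p
    rw [this] at h2
    exact Nat.not_prime_one (by simpa using h2)
  · intro a b hab
    have : (p : ℕ+) = e.symm a * e.symm b := by
      have := congrArg e.symm hab
      rwa [e.symm_apply_apply, map_mul] at this
    rcases ((pnat_prime_iff _).1 (coe_primes_prime p)).2 _ _ this with h | h
    · left
      have := congrArg e h
      rwa [e.apply_symm_apply, map_one] at this
    · right
      have := congrArg e h
      rwa [e.apply_symm_apply, map_one] at this

def eP (e : ℕ+ ≃* ℕ+) : Nat.Primes → Nat.Primes :=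
  fun p => ⟨((e (p : ℕ+) : ℕ+) : ℕ), mulEquiv_coe_prime e p⟩

lemma eP_coe (e : ℕ+ ≃* ℕ+) (p : Nat.Primes) : ((eP e p : Nat.Primes) : ℕ+) = e (p : ℕ+) := by
  apply PNat.coe_injective
  rw [Nat.Primes.coe_pnat_nat]
  rfl

lemma eP_injective (e : ℕ+ ≃* ℕ+) : Function.Injective (eP e) := by
  intro p q h
  have := congrArg (fun z : Nat.Primes => (z : ℕ+)) h
  simp only [eP_coe] at this
  have := e.injective this
  exact Subtype.ext (by rw [← Nat.Primes.coe_pnat_nat p, ← Nat.Primes.coe_pnat_nat q, this])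

lemma mulEquiv_sprod (e : ℕ+ ≃* ℕ+) (S : Finset Nat.Primes) :
    e (sprod S) = sprod (S.image (eP e)) := by
  rw [sprod, map_prod, sprod, Finset.prod_image (fun a _ b _ h => eP_injective e h)]
  exact Finset.prod_congr rfl (fun p _ => (eP_coe e p).symm)

end Skolem

namespace Skolem

open Set

abbrev Df {α : Type} (s : Set (α → ℕ+)) : Prop := (∅ : Set ℕ+).Definable L s

lemma df_of_formula {α : Type} (φ : L.Formula α) : Df {v | φ.Realize v} :=
  Set.empty_definable_iff.2 ⟨φ, rfl⟩

lemma df_termEq {α : Type} (t₁ t₂ : L.Term α) : Df {v | t₁.realize v = t₂.realize v} := by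
  refine Set.empty_definable_iff.2 ⟨t₁.equal t₂, ?_⟩
  ext v
  simp only [Set.mem_setOf_eq, Formula.realize_equal]

lemma df_mulEq {α : Type} (i j k : α) : Df {v | v i * v j = v k} :=
  df_termEq (tmul (Term.var i) (Term.var j)) (Term.var k)

lemma df_eqOne {α : Type} (i : α) : Df {v | v i = 1} :=
  df_termEq (Term.var i) (tone (α := α))

lemma df_eq {α : Type} (i j : α) : Df {v | v i = v j} :=
  df_termEq (Term.var i) (Term.var j)

lemma df_exists {α β : Type} [Finite α] [Finite β] {S : Set ((α ⊕ β) → ℕ+)} (h : Df S) :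
    Df {v | ∃ w : β → ℕ+, Sum.elim v w ∈ S} := by
  have h2 := h.image_comp Sum.inl
  convert h2 using 1
  ext v
  constructor
  · rintro ⟨w, hw⟩
    exact ⟨Sum.elim v w, hw, rfl⟩
  · rintro ⟨V, hV, rfl⟩
    refine ⟨V ∘ Sum.inr, ?_⟩
    have : Sum.elim ((fun g => g ∘ Sum.inl) V) (V ∘ Sum.inr) = V := by
      funext x; cases x <;> rfl
    rwa [this]

lemma df_forall {α β : Type} [Finite α] [Finite β] {S : Set ((α ⊕ β) → ℕ+)} (h : Df S) :
    Df {v | ∀ w : β → ℕ+, Sum.elim v w ∈ S} := by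
  have h2 := (df_exists h.compl).compl
  convert h2 using 1
  ext v
  simp only [Set.mem_compl_iff, Set.mem_setOf_eq, not_exists, not_not]

lemma df_biInter {α ι : Type} [DecidableEq ι] (s : Finset ι) {F : ι → Set (α → ℕ+)}
    (h : ∀ i ∈ s, Df (F i)) : Df (⋂ i ∈ s, F i) := by
  induction s using Finset.induction_on with
  | empty => simpa using Set.definable_univ _ _
  | @insert a s ha ih =>
    rw [Finset.set_biInter_insert]
    exact (h a (Finset.mem_insert_self a s)).inter
      (ih (fun i hi => h i (Finset.mem_insert_of_mem hi)))

lemma df_iInter {α ι : Type} [Fintype ι] [DecidableEq ι] {F : ι → Set (α → ℕ+)}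
    (h : ∀ i, Df (F i)) : Df (⋂ i, F i) := by
  have := df_biInter (Finset.univ : Finset ι) (fun i _ => h i)
  convert this using 1
  simp

lemma df_prime {α : Type} [Finite α] (i : α) : Df {v | ((v i : ℕ+) : ℕ).Prime} := by
  have h1 : Df {v : α → ℕ+ | v i ≠ 1} := (df_eqOne i).compl
  have h2 : Df {V : (α ⊕ Fin 2) → ℕ+ |
      V (Sum.inr 0) * V (Sum.inr 1) = V (Sum.inl i) → V (Sum.inr 0) = 1 ∨ V (Sum.inr 1) = 1} := by
    have := ((df_mulEq (Sum.inr 0 : α ⊕ Fin 2) (Sum.inr 1) (Sum.inl i)).compl.union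
      ((df_eqOne (Sum.inr 0 : α ⊕ Fin 2)).union (df_eqOne (Sum.inr 1 : α ⊕ Fin 2))))
    convert this using 1
    ext V
    simp only [Set.mem_setOf_eq, Set.mem_union, Set.mem_compl_iff, Set.mem_setOf_eq]
    tauto
  have h3 := df_forall h2
  have := h1.inter h3
  convert this using 1
  ext v
  simp only [Set.mem_inter_iff, Set.mem_setOf_eq]
  rw [pnat_prime_iff]
  constructor
  · rintro ⟨h1', h2'⟩
    refine ⟨h1', fun w hw => ?_⟩
    exact h2' _ _ hw.symm
  · rintro ⟨h1', h2'⟩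
    refine ⟨h1', fun a b hab => ?_⟩
    exact h2' ![a, b] (by simpa using hab.symm)

lemma df_prodList : ∀ (N : ℕ) {γ : Type} [Fintype γ] [DecidableEq γ] (l : List γ),
    l.length ≤ N → ∀ (k : γ), Df {v | (l.map v).prod = v k} := by
  intro N
  induction N with
  | zero =>
    intro γ _ _ l hl k
    rw [Nat.le_zero, List.length_eq_zero_iff] at hl
    subst hl
    have hset : {v : γ → ℕ+ | (List.map v []).prod = v k} = {v | v k = 1} := by
      ext v; simp [eq_comm]
    rw [hset]
    exact df_eqOne k
  | succ N ih =>
    intro γ _ _ l hl k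
    match l with
    | [] =>
      have hset : {v : γ → ℕ+ | (List.map v []).prod = v k} = {v | v k = 1} := by
        ext v; simp [eq_comm]
      rw [hset]
      exact df_eqOne k
    | (a :: l) =>
      have hlen : (l.map (Sum.inl : γ → γ ⊕ Fin 1)).length ≤ N := by
        rw [List.length_map]
        simpa using Nat.succ_le_succ_iff.1 hl
      have h1 := ih (l.map (Sum.inl : γ → γ ⊕ Fin 1)) hlen (Sum.inr 0)
      have h2 := df_mulEq (Sum.inl a : γ ⊕ Fin 1) (Sum.inr 0) (Sum.inl k)
      have h3 := df_exists (h1.inter h2)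
      have hset : {v : γ → ℕ+ | (List.map v (a :: l)).prod = v k}
          = {v | ∃ w : Fin 1 → ℕ+, Sum.elim v w ∈
              ({V | (List.map V (l.map (Sum.inl : γ → γ ⊕ Fin 1))).prod = V (Sum.inr 0)} ∩
               {V | V (Sum.inl a) * V (Sum.inr 0) = V (Sum.inl k)})} := by
        ext v
        simp only [Set.mem_setOf_eq, List.map_cons, List.prod_cons, Set.mem_inter_iff,
          List.map_map, Sum.elim_comp_inl, Sum.elim_inl, Sum.elim_inr]
        constructor
        · intro hv
          exact ⟨fun _ => (l.map v).prod, rfl, hv⟩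
        · rintro ⟨w, hw1, hw2⟩
          rw [← hw1] at hw2
          exact hw2
      rw [hset]
      exact h3

end Skolem

namespace Skolem

/-- `e` fixes `D` (as acting componentwise). -/
def FixD {n : ℕ} (D : Set (Fin n → ℕ+)) (e : ℕ+ → ℕ+) : Prop :=
  ∀ a : Fin n → ℕ+, (fun i => e (a i)) ∈ D ↔ a ∈ D

lemma fixD_comp {n : ℕ} {D : Set (Fin n → ℕ+)} {e₁ e₂ : ℕ+ → ℕ+}
    (h₁ : FixD D e₁) (h₂ : FixD D e₂) : FixD D (e₁ ∘ e₂) := by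
  intro a
  show (fun i => e₁ (e₂ (a i))) ∈ D ↔ a ∈ D
  exact (h₁ (fun i => e₂ (a i))).trans (h₂ a)

lemma fixD_base {n m : ℕ} {D : Set (Fin n → ℕ+)} (ψ : L.Formula (Fin n ⊕ Fin m))
    (x : Fin m → ℕ+) (hD : ∀ a, a ∈ D ↔ ψ.Realize (Sum.elim a x)) (e : ℕ+ ≃* ℕ+)
    (he : ∀ j, e (x j) = x j) : FixD D (⇑e) := by
  intro a
  rw [hD, hD]
  have key : Sum.elim (fun i => e (a i)) x = fun z => e (Sum.elim a x z) := by
    funext z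
    cases z with
    | inl i => rfl
    | inr j => exact (he j).symm
  rw [key, realize_mulEquiv e]

lemma fixD_swap_within {n m : ℕ} {D : Set (Fin n → ℕ+)} (ψ : L.Formula (Fin n ⊕ Fin m))
    (x : Fin m → ℕ+) (hD : ∀ a, a ∈ D ↔ ψ.Realize (Sum.elim a x))
    (hsq : ∀ j, Sqf (x j)) (hdisj : ∀ j j', j ≠ j' → Disjoint (supp (x j)) (supp (x j')))
    {p q : Nat.Primes} {j₀ : Fin m} (hp : p ∈ supp (x j₀)) (hq : q ∈ supp (x j₀)) :
    FixD D (⇑(hat (Equiv.swap p q))) := by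
  apply fixD_base ψ x hD
  intro j
  by_cases hj : j = j₀
  · subst hj
    apply hat_fix (hsq j)
    intro z hz
    rcases eq_or_ne z p with rfl | hzp
    · rw [Equiv.swap_apply_left]; exact hq
    rcases eq_or_ne z q with rfl | hzq
    · rw [Equiv.swap_apply_right]; exact hp
    · rw [Equiv.swap_apply_of_ne_of_ne hzp hzq]; exact hz
  · apply hat_fix (hsq j)
    intro z hz
    have hzp : z ≠ p := by
      intro hzp; subst hzp
      exact Finset.disjoint_left.1 (hdisj j j₀ hj) hz hp
    have hzq : z ≠ q := by
      intro hzq; subst hzq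
      exact Finset.disjoint_left.1 (hdisj j j₀ hj) hz hq
    rw [Equiv.swap_apply_of_ne_of_ne hzp hzq]
    exact hz

/-- the mixed swap lemma: a transposition across the two blocks `supp (r i₁)`, `supp (r i₂)`
which both meet `supp (s j₀)` fixes `D`. -/
lemma fixD_swap_mixed {n m : ℕ} {D : Set (Fin n → ℕ+)} (ψ : L.Formula (Fin n ⊕ Fin m))
    (r s : Fin m → ℕ+)
    (hDr : ∀ a, a ∈ D ↔ ψ.Realize (Sum.elim a r))
    (hDs : ∀ a, a ∈ D ↔ ψ.Realize (Sum.elim a s))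
    (hsqr : ∀ j, Sqf (r j)) (hsqs : ∀ j, Sqf (s j))
    (hdisjr : ∀ j j', j ≠ j' → Disjoint (supp (r j)) (supp (r j')))
    (hdisjs : ∀ j j', j ≠ j' → Disjoint (supp (s j)) (supp (s j')))
    {i₁ i₂ : Fin m} (hne : i₁ ≠ i₂) {j₀ : Fin m} {p q : Nat.Primes}
    (hp1 : p ∈ supp (s j₀)) (hp2 : p ∈ supp (r i₁))
    (hq1 : q ∈ supp (s j₀)) (hq2 : q ∈ supp (r i₂))
    {x y : Nat.Primes} (hx : x ∈ supp (r i₂)) (hy : y ∈ supp (r i₁)) :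
    FixD D (⇑(hat (Equiv.swap x y))) := by
  have hd12 : Disjoint (supp (r i₁)) (supp (r i₂)) := hdisjr i₁ i₂ hne
  have hpx : p ≠ x := fun h => Finset.disjoint_left.1 hd12 hp2 (h ▸ hx)
  have hpq : p ≠ q := fun h => Finset.disjoint_left.1 hd12 hp2 (h ▸ hq2)
  have hxy : x ≠ y := fun h => Finset.disjoint_left.1 hd12 hy (h ▸ hx)
  have hxp : x ≠ p := fun h => hpx h.symm
  set A := Equiv.swap y p with hA
  set B := Equiv.swap x q with hB
  have hid : Equiv.swap y x = (A * B) * Equiv.swap p q * (A * B)⁻¹ := by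
    have h1 : (A * B) p = y := by
      rw [Equiv.Perm.mul_apply, hB, Equiv.swap_apply_of_ne_of_ne hpx hpq, hA,
        Equiv.swap_apply_right]
    have h2 : (A * B) q = x := by
      rw [Equiv.Perm.mul_apply, hB, Equiv.swap_apply_right, hA,
        Equiv.swap_apply_of_ne_of_ne hxy hxp]
    calc Equiv.swap y x = Equiv.swap ((A * B) p) ((A * B) q) := by rw [h1, h2]
      _ = (A * B) * Equiv.swap p q * (A * B)⁻¹ := Equiv.swap_apply_apply _ _ _
  have hperm : Equiv.swap x y = A * (B * (Equiv.swap p q * (B⁻¹ * A⁻¹))) := by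
    rw [Equiv.swap_comm x y, hid]
    group
  have hfun : ⇑(hat (Equiv.swap x y)) =
      ⇑(hat A) ∘ ⇑(hat B) ∘ ⇑(hat (Equiv.swap p q)) ∘ ⇑(hat B⁻¹) ∘ ⇑(hat A⁻¹) := by
    funext z
    rw [hperm, hat_mul_apply, hat_mul_apply, hat_mul_apply, hat_mul_apply]
    rfl
  rw [hfun]
  have fA : FixD D (⇑(hat A)) := fixD_swap_within ψ r hDr hsqr hdisjr hy hp2
  have fB : FixD D (⇑(hat B)) := fixD_swap_within ψ r hDr hsqr hdisjr hx hq2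
  have fC : FixD D (⇑(hat (Equiv.swap p q))) := fixD_swap_within ψ s hDs hsqs hdisjs hp1 hq1
  have fA' : FixD D (⇑(hat A⁻¹)) := by
    rw [hA, Equiv.swap_inv]; exact fA
  have fB' : FixD D (⇑(hat B⁻¹)) := by
    rw [hB, Equiv.swap_inv]; exact fB
  exact fixD_comp fA (fixD_comp fB (fixD_comp fC (fixD_comp fB' fA')))

end Skolem

namespace Skolem

lemma image_swap {γ : Type*} [DecidableEq γ] {S : Finset γ} {x y : γ} (hx : x ∉ S) (hy : y ∈ S) :
    S.image (Equiv.swap x y) = insert x (S.erase y) := by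
  ext z
  simp only [Finset.mem_image, Finset.mem_insert, Finset.mem_erase]
  constructor
  · rintro ⟨w, hw, rfl⟩
    rcases eq_or_ne w y with rfl | hwy
    · left; exact Equiv.swap_apply_right x w
    · have hwx : w ≠ x := fun h => hx (h ▸ hw)
      right
      rw [Equiv.swap_apply_of_ne_of_ne hwx hwy]
      exact ⟨hwy, hw⟩
  · rintro (rfl | ⟨hzy, hz⟩)
    · exact ⟨y, hy, Equiv.swap_apply_right z y⟩
    · have hzx : z ≠ x := fun h => hx (h ▸ hz)
      exact ⟨z, hz, Equiv.swap_apply_of_ne_of_ne hzx hzy⟩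

/-- replace components `i₁, i₂`. -/
def upd {m : ℕ} (r : Fin m → ℕ+) (i₁ i₂ : Fin m) (W₁ W₂ : ℕ+) : Fin m → ℕ+ :=
  fun i => if i = i₁ then W₁ else if i = i₂ then W₂ else r i

lemma ilemma {n m : ℕ} {D : Set (Fin n → ℕ+)} (ψ : L.Formula (Fin n ⊕ Fin m))
    (r : Fin m → ℕ+)
    (hDr : ∀ a, a ∈ D ↔ ψ.Realize (Sum.elim a r))
    (hsq : ∀ i, Sqf (r i))
    (hdisj : ∀ i j, i ≠ j → Disjoint (supp (r i)) (supp (r j)))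
    {i₁ i₂ : Fin m} (hne : i₁ ≠ i₂)
    (hswap : ∀ x y : Nat.Primes, x ∈ supp (r i₂) → y ∈ supp (r i₁) →
      FixD D (⇑(hat (Equiv.swap x y)))) :
    ∀ (d : ℕ) (X₁ X₂ : Finset Nat.Primes), (X₁ \ supp (r i₁)).card = d →
      X₁ ∪ X₂ = supp (r i₁) ∪ supp (r i₂) → Disjoint X₁ X₂ →
      X₁.card = (supp (r i₁)).card →
      ∀ a, ψ.Realize (Sum.elim a (upd r i₁ i₂ (sprod X₁) (sprod X₂))) ↔ a ∈ D := by
  intro d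
  induction d with
  | zero =>
    intro X₁ X₂ hd hu hdis hcard a
    have hsub : X₁ ⊆ supp (r i₁) := by
      rw [← Finset.sdiff_eq_empty_iff_subset]
      exact Finset.card_eq_zero.1 hd
    have hX1 : X₁ = supp (r i₁) := Finset.eq_of_subset_of_card_le hsub hcard.ge
    have hX2 : X₂ = supp (r i₂) := by
      have h1 : X₂ = (X₁ ∪ X₂) \ X₁ := (Finset.union_sdiff_cancel_left hdis).symm
      rw [h1, hu, hX1]
      exact Finset.union_sdiff_cancel_left (hdisj i₁ i₂ hne)
    have hupd : upd r i₁ i₂ (sprod X₁) (sprod X₂) = r := by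
      funext i
      unfold upd
      by_cases h1 : i = i₁
      · subst h1; rw [if_pos rfl, hX1, sprod_supp (hsq i)]
      by_cases h2 : i = i₂
      · subst h2; rw [if_neg h1, if_pos rfl, hX2, sprod_supp (hsq i)]
      · rw [if_neg h1, if_neg h2]
    rw [hupd]
    exact (hDr a).symm
  | succ d ih =>
    intro X₁ X₂ hd hu hdis hcard a
    set B₁ := supp (r i₁) with hB₁
    set B₂ := supp (r i₂) with hB₂
    have hx : (X₁ \ B₁).Nonempty := by
      rw [← Finset.card_pos, hd]; exact Nat.succ_pos d
    obtain ⟨x, hxmem⟩ := hx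
    obtain ⟨hx1, hxB1⟩ := Finset.mem_sdiff.1 hxmem
    have hy : (B₁ \ X₁).Nonempty := by
      by_contra hc
      rw [Finset.not_nonempty_iff_eq_empty, Finset.sdiff_eq_empty_iff_subset] at hc
      have : B₁ = X₁ := Finset.eq_of_subset_of_card_le hc hcard.le
      rw [← this] at hd
      simp at hd
    obtain ⟨y, hymem⟩ := hy
    obtain ⟨hyB1, hyX1⟩ := Finset.mem_sdiff.1 hymem
    have hxB2 : x ∈ B₂ := by
      have := Finset.mem_union_left X₂ hx1
      rw [hu] at this
      rcases Finset.mem_union.1 this with h | h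
      · exact absurd h hxB1
      · exact h
    have hyX2 : y ∈ X₂ := by
      have := Finset.mem_union_left B₂ hyB1
      rw [← hu] at this
      rcases Finset.mem_union.1 this with h | h
      · exact absurd h hyX1
      · exact h
    have hxX2 : x ∉ X₂ := Finset.disjoint_left.1 hdis hx1
    have hxy : x ≠ y := fun h => hxB1 (h ▸ hyB1)
    set X₁' := insert y (X₁.erase x) with hX₁'
    set X₂' := insert x (X₂.erase y) with hX₂'
    set g := Equiv.swap x y with hg
    have hxX₁' : x ∉ X₁' := by
      rw [hX₁', Finset.mem_insert]
      push_neg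
      exact ⟨hxy, Finset.notMem_erase x X₁⟩
    have hyX₁' : y ∈ X₁' := Finset.mem_insert_self y _
    have himg1 : X₁'.image g = X₁ := by
      rw [hg, image_swap hxX₁' hyX₁', hX₁', Finset.erase_insert (fun h => hyX1 (Finset.mem_of_mem_erase h))]
      exact Finset.insert_erase hx1
    have hyX₂' : y ∉ X₂' := by
      rw [hX₂', Finset.mem_insert]
      push_neg
      exact ⟨hxy.symm, Finset.notMem_erase y X₂⟩
    have hxX₂' : x ∈ X₂' := Finset.mem_insert_self x _
    have himg2 : X₂'.image g = X₂ := by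
      rw [hg, Equiv.swap_comm, image_swap hyX₂' hxX₂', hX₂',
        Finset.erase_insert (fun h => hxX2 (Finset.mem_of_mem_erase h))]
      exact Finset.insert_erase hyX2
    have hcard' : X₁'.card = B₁.card := by
      rw [hX₁', Finset.card_insert_of_notMem (fun h => hyX1 (Finset.mem_of_mem_erase h)),
        Finset.card_erase_of_mem hx1, ← hcard]
      exact Nat.sub_add_cancel (Finset.card_pos.2 ⟨x, hx1⟩)
    have hu' : X₁' ∪ X₂' = B₁ ∪ B₂ := by
      rw [← hu]
      ext z
      constructor
      · intro hz
        rcases Finset.mem_union.1 hz with h | h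
        · rcases Finset.mem_insert.1 h with rfl | h
          · exact Finset.mem_union_right _ hyX2
          · exact Finset.mem_union_left _ (Finset.mem_of_mem_erase h)
        · rcases Finset.mem_insert.1 h with rfl | h
          · exact Finset.mem_union_left _ hx1
          · exact Finset.mem_union_right _ (Finset.mem_of_mem_erase h)
      · intro hz
        rcases Finset.mem_union.1 hz with h | h
        · by_cases hzx : z = x
          · subst hzx
            exact Finset.mem_union_right _ hxX₂'
          · exact Finset.mem_union_left _
              (Finset.mem_insert_of_mem (Finset.mem_erase.2 ⟨hzx, h⟩))
        · by_cases hzy : z = y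
          · subst hzy
            exact Finset.mem_union_left _ hyX₁'
          · exact Finset.mem_union_right _
              (Finset.mem_insert_of_mem (Finset.mem_erase.2 ⟨hzy, h⟩))
    have hdis' : Disjoint X₁' X₂' := by
      rw [Finset.disjoint_left]
      intro z hz1 hz2
      rcases Finset.mem_insert.1 hz1 with rfl | h1
      · exact hyX₂' hz2
      · rcases Finset.mem_insert.1 hz2 with rfl | h2
        · exact (Finset.mem_erase.1 h1).1 rfl
        · exact Finset.disjoint_left.1 hdis (Finset.mem_of_mem_erase h1)
            (Finset.mem_of_mem_erase h2)
    have hsd : X₁' \ B₁ = (X₁ \ B₁).erase x := by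
      ext z
      simp only [hX₁', Finset.mem_sdiff, Finset.mem_insert, Finset.mem_erase]
      constructor
      · rintro ⟨rfl | ⟨hzx, hz1⟩, hzB⟩
        · exact absurd hyB1 hzB
        · exact ⟨hzx, hz1, hzB⟩
      · rintro ⟨hzx, hz1, hzB⟩
        exact ⟨Or.inr ⟨hzx, hz1⟩, hzB⟩
    have hd' : (X₁' \ B₁).card = d := by
      rw [hsd, Finset.card_erase_of_mem hxmem, hd]
      rfl
    have IH := ih X₁' X₂' hd' hu' hdis' hcard'
    have hfix : FixD D (⇑(hat g)) := hswap x y hxB2 hyB1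
    have hupd : upd r i₁ i₂ (sprod X₁) (sprod X₂) = fun i => hat g (upd r i₁ i₂ (sprod X₁') (sprod X₂') i) := by
      funext i
      unfold upd
      by_cases h1 : i = i₁
      · rw [if_pos h1, if_pos h1, hat_sprod, himg1]
      by_cases h2 : i = i₂
      · rw [if_neg h1, if_neg h1, if_pos h2, if_pos h2, hat_sprod, himg2]
      · rw [if_neg h1, if_neg h1, if_neg h2, if_neg h2]
        refine (hat_fix (hsq i) ?_).symm
        intro z hz
        have hzx : z ≠ x := fun h =>
          Finset.disjoint_left.1 (hdisj i i₂ h2) hz (h ▸ hxB2)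
        have hzy : z ≠ y := fun h =>
          Finset.disjoint_left.1 (hdisj i i₁ h1) hz (h ▸ hyB1)
        rw [hg, Equiv.swap_apply_of_ne_of_ne hzx hzy]
        exact hz
    rw [hupd]
    have helim : Sum.elim a (fun i => hat g (upd r i₁ i₂ (sprod X₁') (sprod X₂') i)) =
        fun z => hat g ((Sum.elim (fun i => (hat g).symm (a i)) (upd r i₁ i₂ (sprod X₁') (sprod X₂'))) z) := by
      funext z
      cases z with
      | inl i => exact ((hat g).apply_symm_apply (a i)).symm
      | inr j => rfl
    rw [helim, realize_mulEquiv (hat g), IH]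
    have := hfix (fun i => (hat g).symm (a i))
    constructor
    · intro h
      have h2 := this.2 h
      have h3 : (fun i => hat g ((hat g).symm (a i))) = a := by
        funext i; exact (hat g).apply_symm_apply (a i)
      rwa [h3] at h2
    · intro h
      apply this.1
      have h3 : (fun i => hat g ((hat g).symm (a i))) = a := by
        funext i; exact (hat g).apply_symm_apply (a i)
      rwa [h3]

end Skolem

namespace Skolem

lemma primes_pnat_inj : Function.Injective (fun p : Nat.Primes => (p : ℕ+)) := by
  intro p q h
  apply Subtype.ext
  rw [← Nat.Primes.coe_pnat_nat p, ← Nat.Primes.coe_pnat_nat q]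
  exact congrArg _ h

lemma merge_def {n k : ℕ} {D : Set (Fin n → ℕ+)} (ψ : L.Formula (Fin n ⊕ Fin (k + 1)))
    (r : Fin (k + 1) → ℕ+)
    (hDr : ∀ a, a ∈ D ↔ ψ.Realize (Sum.elim a r))
    (hsq : ∀ i, Sqf (r i))
    (hdisj : ∀ i j, i ≠ j → Disjoint (supp (r i)) (supp (r j)))
    {i₁ i₂ : Fin (k + 1)} (hne : i₁ ≠ i₂)
    (hswap : ∀ x y : Nat.Primes, x ∈ supp (r i₂) → y ∈ supp (r i₁) →
      FixD D (⇑(hat (Equiv.swap x y)))) :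
    ∃ ψ' : L.Formula (Fin n ⊕ Fin k), ∀ a, a ∈ D ↔
      ψ'.Realize (Sum.elim a
        (fun t => if i₂.succAbove t = i₁ then r i₁ * r i₂ else r (i₂.succAbove t))) := by
  classical
  obtain ⟨k₁, hk₁⟩ := Fin.exists_succAbove_eq hne
  set c₁ := (supp (r i₁)).card with hc₁def
  set c₂ := (supp (r i₂)).card with hc₂def
  set r' : Fin k → ℕ+ :=
    fun t => if i₂.succAbove t = i₁ then r i₁ * r i₂ else r (i₂.succAbove t) with hr'def
  set l₁ : List ((Fin n ⊕ Fin k) ⊕ ((Fin c₁ ⊕ Fin c₂) ⊕ Fin 2)) :=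
    (List.finRange c₁).map (fun t => Sum.inr (Sum.inl (Sum.inl t))) with hl₁def
  set l₂ : List ((Fin n ⊕ Fin k) ⊕ ((Fin c₁ ⊕ Fin c₂) ⊕ Fin 2)) :=
    (List.finRange c₂).map (fun t => Sum.inr (Sum.inl (Sum.inr t))) with hl₂def
  set h : (Fin n ⊕ Fin (k + 1)) → ((Fin n ⊕ Fin k) ⊕ ((Fin c₁ ⊕ Fin c₂) ⊕ Fin 2)) :=
    Sum.elim (fun i => Sum.inl (Sum.inl i))
      (fun i => if h1 : i = i₁ then Sum.inr (Sum.inr 0)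
        else if h2 : i = i₂ then Sum.inr (Sum.inr 1)
        else Sum.inl (Sum.inr (Classical.choose (Fin.exists_succAbove_eq h2)))) with hhdef
  set S : Set (((Fin n ⊕ Fin k) ⊕ ((Fin c₁ ⊕ Fin c₂) ⊕ Fin 2)) → ℕ+) := {V |
    (∀ t : Fin c₁ ⊕ Fin c₂, ((V (Sum.inr (Sum.inl t)) : ℕ+) : ℕ).Prime) ∧
    (∀ t t' : Fin c₁ ⊕ Fin c₂, t ≠ t' →
      V (Sum.inr (Sum.inl t)) ≠ V (Sum.inr (Sum.inl t'))) ∧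
    ((l₁.map V).prod = V (Sum.inr (Sum.inr 0))) ∧
    ((l₂.map V).prod = V (Sum.inr (Sum.inr 1))) ∧
    (V (Sum.inr (Sum.inr 0)) * V (Sum.inr (Sum.inr 1)) = V (Sum.inl (Sum.inr k₁))) ∧
    ψ.Realize (V ∘ h)} with hSdef
  have d1 : Df {V : ((Fin n ⊕ Fin k) ⊕ ((Fin c₁ ⊕ Fin c₂) ⊕ Fin 2)) → ℕ+ |
      ∀ t : Fin c₁ ⊕ Fin c₂, ((V (Sum.inr (Sum.inl t)) : ℕ+) : ℕ).Prime} := by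
    rw [Set.setOf_forall]
    exact df_iInter (fun t => df_prime _)
  have d2 : Df {V : ((Fin n ⊕ Fin k) ⊕ ((Fin c₁ ⊕ Fin c₂) ⊕ Fin 2)) → ℕ+ |
      ∀ t t' : Fin c₁ ⊕ Fin c₂, t ≠ t' →
      V (Sum.inr (Sum.inl t)) ≠ V (Sum.inr (Sum.inl t'))} := by
    rw [Set.setOf_forall]
    refine df_iInter (fun t => ?_)
    rw [Set.setOf_forall]
    refine df_iInter (fun t' => ?_)
    by_cases htt : t = t'
    · have huniv : {V : ((Fin n ⊕ Fin k) ⊕ ((Fin c₁ ⊕ Fin c₂) ⊕ Fin 2)) → ℕ+ | t ≠ t' →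
          V (Sum.inr (Sum.inl t)) ≠ V (Sum.inr (Sum.inl t'))} = Set.univ := by
        ext V; simp [htt]
      rw [huniv]
      exact Set.definable_univ
    · have hcmp : {V : ((Fin n ⊕ Fin k) ⊕ ((Fin c₁ ⊕ Fin c₂) ⊕ Fin 2)) → ℕ+ | t ≠ t' →
          V (Sum.inr (Sum.inl t)) ≠ V (Sum.inr (Sum.inl t'))}
          = {V : ((Fin n ⊕ Fin k) ⊕ ((Fin c₁ ⊕ Fin c₂) ⊕ Fin 2)) → ℕ+ |
              V (Sum.inr (Sum.inl t)) = V (Sum.inr (Sum.inl t'))}ᶜ := by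
        ext V
        simp only [Set.mem_setOf_eq, Set.mem_compl_iff]
        exact ⟨fun hV => hV htt, fun hV _ => hV⟩
      rw [hcmp]
      exact (df_eq _ _).compl
  have d3 : Df {V : ((Fin n ⊕ Fin k) ⊕ ((Fin c₁ ⊕ Fin c₂) ⊕ Fin 2)) → ℕ+ |
      (l₁.map V).prod = V (Sum.inr (Sum.inr 0))} :=
    df_prodList l₁.length l₁ le_rfl _
  have d4 : Df {V : ((Fin n ⊕ Fin k) ⊕ ((Fin c₁ ⊕ Fin c₂) ⊕ Fin 2)) → ℕ+ |
      (l₂.map V).prod = V (Sum.inr (Sum.inr 1))} :=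
    df_prodList l₂.length l₂ le_rfl _
  have d5 : Df {V : ((Fin n ⊕ Fin k) ⊕ ((Fin c₁ ⊕ Fin c₂) ⊕ Fin 2)) → ℕ+ |
      V (Sum.inr (Sum.inr 0)) * V (Sum.inr (Sum.inr 1)) = V (Sum.inl (Sum.inr k₁))} :=
    df_mulEq _ _ _
  have d6 : Df {V : ((Fin n ⊕ Fin k) ⊕ ((Fin c₁ ⊕ Fin c₂) ⊕ Fin 2)) → ℕ+ |
      ψ.Realize (V ∘ h)} :=
    Set.Definable.preimage_comp h (df_of_formula ψ)
  have dS : Df S := by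
    rw [hSdef]
    exact d1.inter (d2.inter (d3.inter (d4.inter (d5.inter d6))))
  have dT : Df {v : Fin n ⊕ Fin k → ℕ+ | ∃ w : (Fin c₁ ⊕ Fin c₂) ⊕ Fin 2 → ℕ+,
      Sum.elim v w ∈ S} := df_exists dS
  obtain ⟨ψ', hψ'⟩ := Set.empty_definable_iff.1 dT
  refine ⟨ψ', fun a => ?_⟩
  have hT := Set.ext_iff.1 hψ' (Sum.elim a r')
  simp only [Set.mem_setOf_eq] at hT
  rw [show (Sum.elim a r') = (Sum.elim a
      (fun t => if i₂.succAbove t = i₁ then r i₁ * r i₂ else r (i₂.succAbove t))) from rfl] at hT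
  rw [← hT]
  constructor
  · -- forward: a ∈ D gives a witness
    intro ha
    set e₁ : {x // x ∈ supp (r i₁)} ≃ Fin c₁ :=
      (supp (r i₁)).equivFin.trans (finCongr hc₁def.symm) with he₁
    set e₂ : {x // x ∈ supp (r i₂)} ≃ Fin c₂ :=
      (supp (r i₂)).equivFin.trans (finCongr hc₂def.symm) with he₂
    set u : Fin c₁ ⊕ Fin c₂ → ℕ+ :=
      Sum.elim (fun t => (((e₁.symm t : _) : Nat.Primes) : ℕ+))
        (fun t => (((e₂.symm t : _) : Nat.Primes) : ℕ+)) with hu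
    refine ⟨Sum.elim u ![r i₁, r i₂], ?_⟩
    rw [hSdef]
    refine ⟨?_, ?_, ?_, ?_, ?_, ?_⟩
    · intro t
      cases t with
      | inl t₀ => exact coe_primes_prime _
      | inr t₀ => exact coe_primes_prime _
    · intro t t' htt heq
      cases t with
      | inl s₁ =>
        cases t' with
        | inl s₂ =>
          apply htt
          have h1 := primes_pnat_inj heq
          have h2 := Subtype.coe_injective h1
          rw [e₁.symm.injective h2]
        | inr s₂ =>
          have h1 := primes_pnat_inj heq
          have hm1 : ((e₁.symm s₁ : _) : Nat.Primes) ∈ supp (r i₁) := (e₁.symm s₁).2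
          have hm2 : ((e₂.symm s₂ : _) : Nat.Primes) ∈ supp (r i₂) := (e₂.symm s₂).2
          rw [← h1] at hm2
          exact Finset.disjoint_left.1 (hdisj i₁ i₂ hne) hm1 hm2
      | inr s₁ =>
        cases t' with
        | inl s₂ =>
          have h1 := primes_pnat_inj heq
          have hm1 : ((e₂.symm s₁ : _) : Nat.Primes) ∈ supp (r i₂) := (e₂.symm s₁).2
          have hm2 : ((e₁.symm s₂ : _) : Nat.Primes) ∈ supp (r i₁) := (e₁.symm s₂).2
          rw [← h1] at hm2
          exact Finset.disjoint_left.1 (hdisj i₁ i₂ hne) hm2 hm1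
        | inr s₂ =>
          apply htt
          have h1 := primes_pnat_inj heq
          have h2 := Subtype.coe_injective h1
          rw [e₂.symm.injective h2]
    · show (l₁.map _).prod = _
      have hmap : l₁.map (Sum.elim (Sum.elim a r') (Sum.elim u ![r i₁, r i₂]))
          = List.ofFn (fun t : Fin c₁ => (((e₁.symm t : _) : Nat.Primes) : ℕ+)) := by
        rw [hl₁def, List.map_map, List.ofFn_eq_map]
        rfl
      rw [hmap, List.prod_ofFn]
      have hprod : ∏ t : Fin c₁, (((e₁.symm t : _) : Nat.Primes) : ℕ+) = sprod (supp (r i₁)) :=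
        calc ∏ t : Fin c₁, (((e₁.symm t : _) : Nat.Primes) : ℕ+)
            = ∏ p : {x // x ∈ supp (r i₁)}, ((p : Nat.Primes) : ℕ+) :=
              Equiv.prod_comp e₁.symm (fun p : {x // x ∈ supp (r i₁)} => ((p : Nat.Primes) : ℕ+))
          _ = sprod (supp (r i₁)) := Finset.prod_coe_sort _ _
      rw [hprod, sprod_supp (hsq i₁)]
      rfl
    · show (l₂.map _).prod = _
      have hmap : l₂.map (Sum.elim (Sum.elim a r') (Sum.elim u ![r i₁, r i₂]))
          = List.ofFn (fun t : Fin c₂ => (((e₂.symm t : _) : Nat.Primes) : ℕ+)) := by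
        rw [hl₂def, List.map_map, List.ofFn_eq_map]
        rfl
      rw [hmap, List.prod_ofFn]
      have hprod : ∏ t : Fin c₂, (((e₂.symm t : _) : Nat.Primes) : ℕ+) = sprod (supp (r i₂)) :=
        calc ∏ t : Fin c₂, (((e₂.symm t : _) : Nat.Primes) : ℕ+)
            = ∏ p : {x // x ∈ supp (r i₂)}, ((p : Nat.Primes) : ℕ+) :=
              Equiv.prod_comp e₂.symm (fun p : {x // x ∈ supp (r i₂)} => ((p : Nat.Primes) : ℕ+))
          _ = sprod (supp (r i₂)) := Finset.prod_coe_sort _ _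
      rw [hprod, sprod_supp (hsq i₂)]
      rfl
    · show r i₁ * r i₂ = Sum.elim a r' (Sum.inr k₁)
      show r i₁ * r i₂ = r' k₁
      simp only [hr'def]
      rw [if_pos hk₁]
    · have hcomp : (Sum.elim (Sum.elim a r') (Sum.elim u ![r i₁, r i₂])) ∘ h
          = Sum.elim a r := by
        funext z
        cases z with
        | inl i => rfl
        | inr i =>
          show (Sum.elim (Sum.elim a r') (Sum.elim u ![r i₁, r i₂])) (h (Sum.inr i)) = r i
          rw [hhdef]
          simp only [Sum.elim_inr]
          by_cases h1 : i = i₁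
          · subst h1; rw [dif_pos rfl]; rfl
          by_cases h2 : i = i₂
          · subst h2; rw [dif_neg h1, dif_pos rfl]; rfl
          · rw [dif_neg h1, dif_neg h2]
            have hspec := Classical.choose_spec (Fin.exists_succAbove_eq h2)
            show r' (Classical.choose _) = r i
            simp only [hr'def]
            rw [if_neg (by rw [hspec]; exact h1), hspec]
      show ψ.Realize _
      rw [hcomp]
      exact (hDr a).1 ha
  · -- backward
    rintro ⟨w, hw⟩
    rw [hSdef] at hw
    obtain ⟨hw1, hw2, hw3, hw4, hw5, hw6⟩ := hw
    set uh : Fin c₁ ⊕ Fin c₂ → Nat.Primes := fun t => ⟨((w (Sum.inl t) : ℕ+) : ℕ), hw1 t⟩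
      with huhdef
    have huhcoe : ∀ t, ((uh t : Nat.Primes) : ℕ+) = w (Sum.inl t) := by
      intro t
      apply PNat.coe_injective
      rw [Nat.Primes.coe_pnat_nat]
    have huhinj : Function.Injective uh := by
      intro t t' heq
      by_contra htt
      apply hw2 t t' htt
      show w (Sum.inl t) = w (Sum.inl t')
      rw [← huhcoe t, ← huhcoe t', heq]
    set U₁ : Finset Nat.Primes := Finset.univ.image (fun t : Fin c₁ => uh (Sum.inl t)) with hU₁
    set U₂ : Finset Nat.Primes := Finset.univ.image (fun t : Fin c₂ => uh (Sum.inr t)) with hU₂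
    have hinj1 : Function.Injective (fun t : Fin c₁ => uh (Sum.inl t)) :=
      fun x y hxy => Sum.inl_injective (huhinj hxy)
    have hinj2 : Function.Injective (fun t : Fin c₂ => uh (Sum.inr t)) :=
      fun x y hxy => Sum.inr_injective (huhinj hxy)
    have hsprod1 : sprod U₁ = w (Sum.inr 0) := by
      show sprod U₁ = Sum.elim (Sum.elim a r') w (Sum.inr (Sum.inr 0))
      rw [← hw3]
      rw [show l₁.map (Sum.elim (Sum.elim a r') w)
          = List.ofFn (fun t : Fin c₁ => w (Sum.inl (Sum.inl t))) from by
        rw [hl₁def, List.map_map, List.ofFn_eq_map]; rfl]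
      rw [List.prod_ofFn, hU₁, sprod, Finset.prod_image (fun x _ y _ hxy => hinj1 hxy)]
      exact Finset.prod_congr rfl (fun t _ => huhcoe (Sum.inl t))
    have hsprod2 : sprod U₂ = w (Sum.inr 1) := by
      show sprod U₂ = Sum.elim (Sum.elim a r') w (Sum.inr (Sum.inr 1))
      rw [← hw4]
      rw [show l₂.map (Sum.elim (Sum.elim a r') w)
          = List.ofFn (fun t : Fin c₂ => w (Sum.inl (Sum.inr t))) from by
        rw [hl₂def, List.map_map, List.ofFn_eq_map]; rfl]
      rw [List.prod_ofFn, hU₂, sprod, Finset.prod_image (fun x _ y _ hxy => hinj2 hxy)]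
      exact Finset.prod_congr rfl (fun t _ => huhcoe (Sum.inr t))
    have hcardU₁ : U₁.card = (supp (r i₁)).card := by
      rw [hU₁, Finset.card_image_of_injective _ hinj1, Finset.card_univ, Fintype.card_fin]
    have hdisU : Disjoint U₁ U₂ := by
      rw [Finset.disjoint_left]
      intro p hp1 hp2
      obtain ⟨t, _, rfl⟩ := Finset.mem_image.1 hp1
      obtain ⟨t', _, ht'⟩ := Finset.mem_image.1 hp2
      cases huhinj ht'
    have hWmul : sprod U₁ * sprod U₂ = r i₁ * r i₂ := by
      rw [hsprod1, hsprod2]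
      have h5 : w (Sum.inr 0) * w (Sum.inr 1) = r' k₁ := hw5
      rw [h5]
      simp only [hr'def]
      rw [if_pos hk₁]
    have hunion : U₁ ∪ U₂ = supp (r i₁) ∪ supp (r i₂) := by
      have h1 : sprod (U₁ ∪ U₂) = r i₁ * r i₂ := by
        rw [sprod, Finset.prod_union hdisU]
        exact hWmul
      have h2 : sprod (supp (r i₁) ∪ supp (r i₂)) = r i₁ * r i₂ := by
        rw [sprod, Finset.prod_union (hdisj i₁ i₂ hne)]
        show sprod (supp (r i₁)) * sprod (supp (r i₂)) = _
        rw [sprod_supp (hsq i₁), sprod_supp (hsq i₂)]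
      have h3 := h1.trans h2.symm
      have h4 := congrArg supp h3
      rwa [supp_sprod, supp_sprod] at h4
    have HINV := ilemma ψ r hDr hsq hdisj hne hswap (U₁ \ supp (r i₁)).card U₁ U₂ rfl
      hunion hdisU hcardU₁ a
    have hcomp : (Sum.elim (Sum.elim a r') w) ∘ h
        = Sum.elim a (upd r i₁ i₂ (sprod U₁) (sprod U₂)) := by
      funext z
      cases z with
      | inl i => rfl
      | inr i =>
        show (Sum.elim (Sum.elim a r') w) (h (Sum.inr i)) = upd r i₁ i₂ (sprod U₁) (sprod U₂) i
        rw [hhdef]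
        simp only [Sum.elim_inr]
        unfold upd
        by_cases h1 : i = i₁
        · rw [dif_pos h1, if_pos h1]
          exact hsprod1.symm
        by_cases h2 : i = i₂
        · rw [dif_neg h1, dif_pos h2, if_neg h1, if_pos h2]
          exact hsprod2.symm
        · rw [dif_neg h1, dif_neg h2, if_neg h1, if_neg h2]
          have hspec := Classical.choose_spec (Fin.exists_succAbove_eq h2)
          show r' (Classical.choose _) = r i
          simp only [hr'def]
          rw [if_neg (by rw [hspec]; exact h1), hspec]
    rw [hcomp] at hw6
    exact HINV.1 hw6

end Skolem

namespace Skolem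

lemma supp_nonempty_of_ne_one {x : ℕ+} (hx : Sqf x) (h : x ≠ 1) : (supp x).Nonempty := by
  rw [Finset.nonempty_iff_ne_empty]
  intro hc
  apply h
  rw [← sprod_supp hx, hc, sprod, Finset.prod_empty]

lemma mem_PSupp_iff {m : ℕ} (x : Fin m → ℕ+) (q : Nat.Primes) :
    ((q : ℕ) ∈ PSupp x) ↔ ∃ j, q ∈ supp (x j) := by
  constructor
  · rintro ⟨hp, j, hdvd⟩
    refine ⟨j, ?_⟩
    rw [mem_supp, PNat.dvd_iff, Nat.Primes.coe_pnat_nat]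
    exact hdvd
  · rintro ⟨j, hj⟩
    rw [mem_supp, PNat.dvd_iff, Nat.Primes.coe_pnat_nat] at hj
    exact ⟨q.property, j, hj⟩

/-- delete a component equal to 1. -/
lemma delete_def {n k : ℕ} (ψ : L.Formula (Fin n ⊕ Fin (k + 1))) (r : Fin (k + 1) → ℕ+)
    (i₀ : Fin (k + 1)) (h1 : r i₀ = 1) :
    ∃ ψ'' : L.Formula (Fin n ⊕ Fin k),
      ∀ a : Fin n → ℕ+, ψ''.Realize (Sum.elim a (fun t => r (i₀.succAbove t)))
        ↔ ψ.Realize (Sum.elim a r) := by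
  classical
  set σ : (Fin n ⊕ Fin (k + 1)) → L.Term (Fin n ⊕ Fin k) :=
    Sum.elim (fun i => Term.var (Sum.inl i))
      (fun i => if h : i = i₀ then tone
        else Term.var (Sum.inr (Classical.choose (Fin.exists_succAbove_eq h)))) with hσdef
  refine ⟨ψ.subst σ, fun a => ?_⟩
  have hfun : (fun z => (σ z).realize (Sum.elim a (fun t => r (i₀.succAbove t))))
      = Sum.elim a r := by
    funext z
    cases z with
    | inl i => rfl
    | inr i =>
      rw [hσdef]
      simp only [Sum.elim_inr]
      by_cases h : i = i₀
      · subst h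
        rw [dif_pos rfl]
        simp only [Sum.elim_inr, realize_tone]
        exact h1.symm
      · rw [dif_neg h]
        have hspec := Classical.choose_spec (Fin.exists_succAbove_eq h)
        show r (i₀.succAbove _) = r i
        rw [hspec]
  rw [Formula.Realize, Formula.Realize, ← hfun]
  exact BoundedFormula.realize_subst

end Skolem


end AuxSkolem

open Skolem in
/-- If `r̄` is a good tuple for `D` of least possible length, then every monoid
automorphism of `ℕ⁺` fixing `D` setwise permutes the components of `r̄`. -/
theorem automorphism_permutes_minimal_radicals (n m : ℕ) (D : Set (Fin n → ℕ+))
    (r : Fin m → ℕ+) (hr : GoodTuple n D r)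
    (hmin : ∀ (m' : ℕ) (r' : Fin m' → ℕ+), GoodTuple n D r' → m ≤ m') :
    ∀ f : ℕ+ ≃* ℕ+, (fun a : Fin n → ℕ+ => fun i => f (a i)) '' D = D →
      ∃ τ : Equiv.Perm (Fin m), ∀ i, f (r i) = r (τ i) := by
  classical
  intro f hf
  obtain ⟨hsq, hcop, ⟨ψ, hψ⟩, hsupp⟩ := hr
  have hDr : ∀ a, a ∈ D ↔ ψ.Realize (Sum.elim a r) := fun a => by rw [hψ]; exact Iff.rfl
  have hdisjr : ∀ i j, i ≠ j → Disjoint (supp (r i)) (supp (r j)) :=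
    fun i j hij => disjoint_supp_of_coprime (hcop i j hij)
  have hFix : FixD D ⇑f := by
    intro a
    constructor
    · intro ha
      rw [← hf] at ha
      obtain ⟨b, hb, hba⟩ := ha
      have : b = a := funext fun i => f.injective (congrFun hba i)
      rwa [← this]
    · intro ha
      rw [← hf]
      exact ⟨a, ha, rfl⟩
  have hFixSymm : ∀ a, a ∈ D ↔ (fun i => f.symm (a i)) ∈ D := by
    intro a
    have h0 := hFix (fun i => f.symm (a i))
    have h2 : (fun i => f (f.symm (a i))) = a := funext fun i => f.apply_symm_apply (a i)
    rw [h2] at h0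
    exact h0
  set s : Fin m → ℕ+ := fun j => f (r j) with hsdef
  have hDs : ∀ a, a ∈ D ↔ ψ.Realize (Sum.elim a s) := by
    intro a
    rw [hFixSymm a, hDr]
    have key : Sum.elim (fun i => f.symm (a i)) r = fun z => f.symm (Sum.elim a s z) := by
      funext z
      cases z with
      | inl i => rfl
      | inr j => exact (f.symm_apply_apply (r j)).symm
    rw [key, realize_mulEquiv f.symm]
  have hDrsymm : ∀ a, a ∈ D ↔ ψ.Realize (Sum.elim a (fun j => f.symm (r j))) := by
    intro a
    rw [← hFix a, hDr]
    have key : Sum.elim (fun i => f (a i)) r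
        = fun z => f (Sum.elim a (fun j => f.symm (r j)) z) := by
      funext z
      cases z with
      | inl i => rfl
      | inr j => exact (f.apply_symm_apply (r j)).symm
    rw [key, realize_mulEquiv f]
  have hs_eq : ∀ j, s j = sprod ((supp (r j)).image (eP f)) := by
    intro j
    show f (r j) = _
    conv_lhs => rw [← sprod_supp (hsq j)]
    exact mulEquiv_sprod f _
  have hsupp_s : ∀ j, supp (s j) = (supp (r j)).image (eP f) := by
    intro j; rw [hs_eq j, supp_sprod]
  have hsqs : ∀ j, Sqf (s j) := fun j => by rw [hs_eq j]; exact sqf_sprod _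
  have hdisjs : ∀ j j', j ≠ j' → Disjoint (supp (s j)) (supp (s j')) := by
    intro j j' hjj
    rw [hsupp_s, hsupp_s]
    exact (Finset.disjoint_image (eP_injective f)).2 (hdisjr j j' hjj)
  have hPS_rs : PSupp r ⊆ PSupp s := hsupp m s ψ (Set.ext hDs)
  have hPS_sr : PSupp s ⊆ PSupp r := by
    have hsub := hsupp m (fun j => f.symm (r j)) ψ (Set.ext hDrsymm)
    intro p hp
    obtain ⟨hpp, j, hdvd⟩ := hp
    obtain ⟨j', hqsupp⟩ := (mem_PSupp_iff s ⟨p, hpp⟩).1 ⟨hpp, j, hdvd⟩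
    rw [hsupp_s] at hqsupp
    obtain ⟨q₀, hq₀, hq₀q⟩ := Finset.mem_image.1 hqsupp
    have hq₀PS : ((q₀ : ℕ)) ∈ PSupp r := (mem_PSupp_iff r q₀).2 ⟨j', hq₀⟩
    obtain ⟨_, i, hdvd'⟩ := hsub hq₀PS
    refine ⟨hpp, i, ?_⟩
    have h1 : (q₀ : ℕ+) ∣ f.symm (r i) := by
      rw [PNat.dvd_iff, Nat.Primes.coe_pnat_nat]; exact hdvd'
    have h2 : f (q₀ : ℕ+) ∣ r i := by
      have h3 := map_dvd f h1
      rwa [f.apply_symm_apply] at h3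
    rw [← eP_coe f q₀, hq₀q] at h2
    exact PNat.dvd_iff.1 h2
  have hne1 : ∀ i, r i ≠ 1 := by
    intro i₀ h1
    have hm : 0 < m := i₀.pos
    obtain ⟨k, rfl⟩ : ∃ k, m = k + 1 := ⟨m - 1, by omega⟩
    obtain ⟨ψ'', hψ''⟩ := delete_def ψ r i₀ h1
    have hgood : GoodTuple n D (fun t => r (i₀.succAbove t)) := by
      refine ⟨fun t => hsq _,
        fun t t' htt => hcop _ _ (fun hc => htt (Fin.succAbove_right_injective hc)),
        ⟨ψ'', Set.ext (fun a => (hDr a).trans (hψ'' a).symm)⟩, ?_⟩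
      intro l c χ hχ p hp
      obtain ⟨hpp, t, hdvd⟩ := hp
      exact hsupp l c χ hχ ⟨hpp, _, hdvd⟩
    have := hmin k _ hgood
    omega
  by_cases hgood : ∀ j, ∃ i, supp (s j) ⊆ supp (r i)
  · -- Case 1: f permutes the components
    choose c hc using hgood
    have hmem_s : ∀ {q : Nat.Primes} {i : Fin m}, q ∈ supp (r i) → ∃ j, q ∈ supp (s j) := by
      intro q i hq
      exact (mem_PSupp_iff s q).1 (hPS_rs ((mem_PSupp_iff r q).2 ⟨i, hq⟩))
    have hcval : ∀ {j : Fin m} {q : Nat.Primes} {i : Fin m},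
        q ∈ supp (s j) → q ∈ supp (r i) → c j = i := by
      intro j q i hqs hqr
      by_contra hci
      exact Finset.disjoint_left.1 (hdisjr _ _ hci) (hc j hqs) hqr
    have hsurj : Function.Surjective c := by
      intro i
      obtain ⟨p, hp⟩ := supp_nonempty_of_ne_one (hsq i) (hne1 i)
      obtain ⟨j, hj⟩ := hmem_s hp
      exact ⟨j, hcval hj hp⟩
    have hinj : Function.Injective c := Finite.injective_iff_surjective.2 hsurj
    refine ⟨Equiv.ofBijective c ⟨hinj, hsurj⟩, fun j => ?_⟩
    show f (r j) = r (c j)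
    have hsuppeq : supp (s j) = supp (r (c j)) := by
      apply Finset.Subset.antisymm (hc j)
      intro p hp
      obtain ⟨j', hj'⟩ := hmem_s hp
      have hcc := hcval hj' hp
      rw [hinj hcc] at hj'
      exact hj'
    show s j = r (c j)
    rw [← sprod_supp (hsqs j), hsuppeq, sprod_supp (hsq (c j))]
  · -- Case 2: contradiction with minimality
    exfalso
    push_neg at hgood
    obtain ⟨j₀, hj₀⟩ := hgood
    have hm : 0 < m := j₀.pos
    obtain ⟨k, rfl⟩ : ∃ k, m = k + 1 := ⟨m - 1, by omega⟩
    have hs_ne : (supp (s j₀)).Nonempty := by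
      rcases Finset.eq_empty_or_nonempty (supp (s j₀)) with h | h
      · exact absurd (h ▸ Finset.empty_subset _) (hj₀ j₀)
      · exact h
    obtain ⟨p, hp⟩ := hs_ne
    obtain ⟨i₁, hpi₁⟩ := (mem_PSupp_iff r p).1 (hPS_sr ((mem_PSupp_iff s p).2 ⟨j₀, hp⟩))
    obtain ⟨q, hq, hqn⟩ := Finset.not_subset.1 (hj₀ i₁)
    obtain ⟨i₂, hqi₂⟩ := (mem_PSupp_iff r q).1 (hPS_sr ((mem_PSupp_iff s q).2 ⟨j₀, hq⟩))
    have hne12 : i₁ ≠ i₂ := fun h => hqn (h ▸ hqi₂)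
    have hswap : ∀ x y : Nat.Primes, x ∈ supp (r i₂) → y ∈ supp (r i₁) →
        FixD D (⇑(hat (Equiv.swap x y))) :=
      fun x y hx hy => fixD_swap_mixed ψ r s hDr hDs hsq hsqs hdisjr hdisjs hne12
        hp hpi₁ hq hqi₂ hx hy
    obtain ⟨ψ', hψ'⟩ := merge_def ψ r hDr hsq hdisjr hne12 hswap
    set r' : Fin k → ℕ+ :=
      fun t => if i₂.succAbove t = i₁ then r i₁ * r i₂ else r (i₂.succAbove t) with hr'def
    have hr'cases : ∀ t, (i₂.succAbove t = i₁ ∧ r' t = r i₁ * r i₂) ∨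
        (i₂.succAbove t ≠ i₁ ∧ r' t = r (i₂.succAbove t)) := by
      intro t
      by_cases h : i₂.succAbove t = i₁
      · left; exact ⟨h, by simp only [hr'def]; rw [if_pos h]⟩
      · right; exact ⟨h, by simp only [hr'def]; rw [if_neg h]⟩
    have hsq' : ∀ t, Sqf (r' t) := by
      intro t
      rcases hr'cases t with ⟨_, h⟩ | ⟨_, h⟩
      · rw [h]; exact sqf_mul (hsq i₁) (hsq i₂) (hdisjr _ _ hne12)
      · rw [h]; exact hsq _
    have hdisj' : ∀ t t', t ≠ t' → Disjoint (supp (r' t)) (supp (r' t')) := by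
      intro t t' htt
      rcases hr'cases t with ⟨h1, h2⟩ | ⟨h1, h2⟩ <;>
        rcases hr'cases t' with ⟨h1', h2'⟩ | ⟨h1', h2'⟩
      · exact absurd (Fin.succAbove_right_injective (h1.trans h1'.symm)) htt
      · rw [h2, h2', supp_mul]
        refine Finset.disjoint_union_left.2 ⟨?_, ?_⟩
        · exact hdisjr i₁ _ (fun h => h1' h.symm)
        · exact hdisjr i₂ _ (fun h => (Fin.succAbove_ne i₂ t') h.symm)
      · rw [h2, h2', supp_mul]
        refine Finset.disjoint_union_right.2 ⟨?_, ?_⟩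
        · exact hdisjr _ i₁ h1
        · exact hdisjr _ i₂ (Fin.succAbove_ne i₂ t)
      · rw [h2, h2']
        exact hdisjr _ _ (fun h => htt (Fin.succAbove_right_injective h))
    have hgood' : GoodTuple n D r' := by
      refine ⟨hsq', fun t t' htt => coprime_of_disjoint_supp (hdisj' t t' htt),
        ⟨ψ', Set.ext hψ'⟩, ?_⟩
      intro l c χ hχ p hp
      obtain ⟨hpp, t, hdvd⟩ := hp
      apply hsupp l c χ hχ
      rcases hr'cases t with ⟨_, h2⟩ | ⟨_, h2⟩
      · rw [h2, PNat.mul_coe] at hdvd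
        rcases (Nat.Prime.dvd_mul hpp).1 hdvd with h | h
        · exact ⟨hpp, i₁, h⟩
        · exact ⟨hpp, i₂, h⟩
      · rw [h2] at hdvd
        exact ⟨hpp, _, hdvd⟩
    have := hmin k r' hgood'
    omega
end

section
/- Weak coding of definable sets of squarefree tuples (standard-model form): let D ⊆ (ℕ⁺)ⁿ be definable with parameters, and suppose every component of every tuple in D is squarefree. Then there exists a finite set X ⊆ ℕ⁺ such that D is definable over some tuple of elements of X, and every monoid automorphism f of ℕ⁺ whose componentwise action on (ℕ⁺)ⁿ maps D onto D satisfies f(X) = X (setwise). In other words, D has an almost canonical parameter. -/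
open FirstOrder Language

set_option linter.unusedSectionVars false

section TermHelpers

variable {α : Type*}

def tone : L.Term α := Term.func (l := 0) (()) ![]

def tmul (t₁ t₂ : L.Term α) : L.Term α := Term.func (l := 2) (()) ![t₁, t₂]

variable {M : Type*} [Monoid M]

@[simp] lemma realize_tone (v : α → M) : (tone : L.Term α).realize v = 1 := rfl

@[simp] lemma realize_tmul (t₁ t₂ : L.Term α) (v : α → M) :
    (tmul t₁ t₂).realize v = t₁.realize v * t₂.realize v := rfl

end TermHelpers

section TermHelpers2

variable {α : Type*} {M : Type*} [Monoid M]

def tpow (t : L.Term α) : ℕ → L.Term α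
  | 0 => tone
  | e + 1 => tmul (tpow t e) t

@[simp] lemma realize_tpow (t : L.Term α) (e : ℕ) (v : α → M) :
    (tpow t e).realize v = t.realize v ^ e := by
  induction e with
  | zero => simp [tpow]
  | succ e ih => simp [tpow, ih, pow_succ]

def tprodL : List (L.Term α) → L.Term α
  | [] => tone
  | t :: ts => tmul t (tprodL ts)

@[simp] lemma realize_tprod (l : List (L.Term α)) (v : α → M) :
    (tprodL l).realize v = (l.map (fun t => t.realize v)).prod := by
  induction l with
  | nil => simp [tprodL]
  | cons t ts ih => simp [tprodL, ih]

end TermHelpers2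

section PrimeChar

/-- syntactic primality characterization in `ℕ+`. -/
lemma pchar_iff (x : ℕ+) :
    ((x : ℕ).Prime) ↔ (x ≠ 1 ∧ ∀ a b : ℕ+, a * b = x → a = 1 ∨ b = 1) := by
  constructor
  · intro hp
    refine ⟨fun h => by simp [h] at hp; exact hp.ne_one rfl, fun a b hab => ?_⟩
    have h1 : (a : ℕ) * (b : ℕ) = (x : ℕ) := by exact_mod_cast congrArg (fun y : ℕ+ => (y : ℕ)) hab
    have hd : (a : ℕ) ∣ (x : ℕ) := ⟨b, h1.symm⟩
    rcases (Nat.Prime.eq_one_or_self_of_dvd hp _ hd) with h | h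
    · left; exact PNat.coe_injective (by simpa using h)
    · right
      have : (b : ℕ) = 1 := by
        have hxne : (x : ℕ) ≠ 0 := x.ne_zero
        have := h1
        rw [h] at this
        nlinarith [x.pos, this]
      exact PNat.coe_injective (by simpa using this)
  · rintro ⟨hne, h⟩
    rw [← Nat.irreducible_iff_nat_prime]
    constructor
    · rw [Nat.isUnit_iff]
      intro h1
      exact hne (PNat.coe_injective (by simpa using h1))
    · intro a b hab
      have ha : 0 < a := by
        rcases Nat.eq_zero_or_pos a with h0 | h0
        · exfalso; rw [h0, zero_mul] at hab; exact x.ne_zero hab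
        · exact h0
      have hb : 0 < b := by
        rcases Nat.eq_zero_or_pos b with h0 | h0
        · exfalso; rw [h0, mul_zero] at hab; exact x.ne_zero hab
        · exact h0
      have : (⟨a, ha⟩ : ℕ+) * ⟨b, hb⟩ = x := by
        apply PNat.coe_injective
        show a * b = (x : ℕ)
        exact hab.symm
      rcases h _ _ this with h1 | h1
      · left; rw [Nat.isUnit_iff]; exact congrArg (fun y : ℕ+ => (y : ℕ)) h1
      · right; rw [Nat.isUnit_iff]; exact congrArg (fun y : ℕ+ => (y : ℕ)) h1

end PrimeChar

section PNatGen

/-- Every `n : ℕ+` is either 1 or has a prime factor `p` with `n = p * d`, `d < n`. -/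
lemma pnat_exists_prime_factor (x : ℕ+) (hx : x ≠ 1) :
    ∃ (p d : ℕ+), (p : ℕ).Prime ∧ x = p * d ∧ (d : ℕ) < (x : ℕ) := by
  have h2 : 2 ≤ (x : ℕ) := by
    rcases Nat.lt_or_ge (x : ℕ) 2 with h | h
    · interval_cases h' : (x : ℕ)
      · exact absurd h' x.ne_zero
      · exact absurd (PNat.coe_injective (by simpa using h')) hx
    · exact h
  obtain ⟨p, hp, hpd⟩ := Nat.exists_prime_and_dvd (by omega : (x : ℕ) ≠ 1)
  obtain ⟨d, hd⟩ := hpd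
  have hdpos : 0 < d := by
    rcases Nat.eq_zero_or_pos d with h0 | h0
    · exfalso; rw [h0, mul_zero] at hd; exact x.ne_zero hd
    · exact h0
  refine ⟨⟨p, hp.pos⟩, ⟨d, hdpos⟩, hp, ?_, ?_⟩
  · apply PNat.coe_injective; show (x : ℕ) = p * d; exact hd
  · calc d < 2 * d := by omega
    _ ≤ p * d := Nat.mul_le_mul_right d hp.two_le
    _ = (x : ℕ) := hd.symm

/-- Two monoid homs `ℕ+ →* M` agreeing on primes are equal. -/
lemma pnat_monoidHom_ext {M : Type*} [Monoid M] (f g : ℕ+ →* M)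
    (h : ∀ p : ℕ+, (p : ℕ).Prime → f p = g p) : f = g := by
  ext x
  induction x using PNat.strongInductionOn with
  | _ x ih =>
    by_cases hx : x = 1
    · simp [hx]
    · obtain ⟨p, d, hp, rfl, hlt⟩ := pnat_exists_prime_factor x hx
      rw [map_mul, map_mul, h p hp, ih d hlt]

/-- An element all of whose prime divisors are fixed by a `MulEquiv` is fixed. -/
lemma pnat_fix_of_prime_divisors (f : ℕ+ ≃* ℕ+) (x : ℕ+)
    (h : ∀ p : ℕ+, (p : ℕ).Prime → p ∣ x → f p = p) : f x = x := by
  induction x using PNat.strongInductionOn with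
  | _ x ih =>
    by_cases hx : x = 1
    · simp [hx]
    · obtain ⟨p, d, hp, rfl, hlt⟩ := pnat_exists_prime_factor x hx
      rw [map_mul, h p hp ⟨d, rfl⟩, ih d hlt]
      intro q hq hqd
      exact h q hq (hqd.mul_left p)

/-- A `MulEquiv` of `ℕ+` preserves primality. -/
lemma mulEquiv_prime (f : ℕ+ ≃* ℕ+) {p : ℕ+} (hp : (p : ℕ).Prime) :
    ((f p : ℕ)).Prime := by
  rw [pchar_iff] at hp ⊢
  obtain ⟨hne, h⟩ := hp
  constructor
  · intro h1
    exact hne (by simpa using f.injective (by simpa using h1))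
  · intro a b hab
    have : f.symm a * f.symm b = p := by
      rw [← map_mul]
      simpa using congrArg f.symm hab
    rcases h _ _ this with h1 | h1
    · left
      have := congrArg f h1
      simpa using this
    · right
      have := congrArg f h1
      simpa using this

end PNatGen

section ExtendPerm

/-- The type of primes in `ℕ+`. -/
abbrev PP : Type := {p : ℕ+ // (p : ℕ).Prime}

instance : Infinite PP :=
  Infinite.of_injective (fun q : Nat.Primes => (⟨⟨(q : ℕ), q.2.pos⟩, q.2⟩ : PP))
    (by
      rintro ⟨a, ha⟩ ⟨b, hb⟩ h
      have : (a : ℕ) = (b : ℕ) := congrArg (fun q : PP => ((q : ℕ+) : ℕ)) h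
      exact Subtype.ext this)

noncomputable def permPNat (σ : Equiv.Perm PP) : ℕ+ →* ℕ+ where
  toFun n := (n : ℕ).factorization.prod
    (fun p e => (if h : p.Prime then ((σ ⟨⟨p, h.pos⟩, h⟩ : PP) : ℕ+) else 1) ^ e)
  map_one' := by simp
  map_mul' m n := by
    rw [← Finsupp.prod_add_index' (by intro a; simp) (by intro a b c; rw [pow_add]),
      ← Nat.factorization_mul m.ne_zero n.ne_zero]
    rfl

lemma permPNat_prime (σ : Equiv.Perm PP) (p : PP) :
    permPNat σ (p : ℕ+) = ((σ p : PP) : ℕ+) := by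
  have h : ((p : ℕ+) : ℕ).factorization = Finsupp.single ((p : ℕ+) : ℕ) 1 :=
    Nat.Prime.factorization p.2
  show ((p : ℕ+) : ℕ).factorization.prod _ = _
  rw [h, Finsupp.prod_single_index (by simp)]
  rw [dif_pos p.2, pow_one]
  rfl

end ExtendPerm

section ExtendPerm2

lemma permPNat_comp (σ τ : Equiv.Perm PP) :
    (permPNat σ).comp (permPNat τ) = permPNat (σ * τ) := by
  apply pnat_monoidHom_ext
  intro p hp
  have : p = ((⟨p, hp⟩ : PP) : ℕ+) := rfl
  rw [this, MonoidHom.comp_apply, permPNat_prime, permPNat_prime, permPNat_prime]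
  rfl

lemma permPNat_one : permPNat 1 = MonoidHom.id ℕ+ := by
  apply pnat_monoidHom_ext
  intro p hp
  have : p = ((⟨p, hp⟩ : PP) : ℕ+) := rfl
  rw [this, permPNat_prime]
  rfl

/-- Extend a permutation of the primes to a `MulEquiv` of `ℕ+`. -/
noncomputable def extendPerm (σ : Equiv.Perm PP) : ℕ+ ≃* ℕ+ where
  toFun := permPNat σ
  invFun := permPNat σ⁻¹
  left_inv x := by
    have h : (permPNat σ⁻¹).comp (permPNat σ) = MonoidHom.id ℕ+ := by
      rw [permPNat_comp, inv_mul_cancel, permPNat_one]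
    exact DFunLike.congr_fun h x
  right_inv x := by
    have h : (permPNat σ).comp (permPNat σ⁻¹) = MonoidHom.id ℕ+ := by
      rw [permPNat_comp, mul_inv_cancel, permPNat_one]
    exact DFunLike.congr_fun h x
  map_mul' := (permPNat σ).map_mul

@[simp] lemma extendPerm_prime (σ : Equiv.Perm PP) (p : PP) :
    extendPerm σ (p : ℕ+) = ((σ p : PP) : ℕ+) := permPNat_prime σ p

/-- The permutation of primes induced by a `MulEquiv` of `ℕ+`. -/
noncomputable def permOf (f : ℕ+ ≃* ℕ+) : Equiv.Perm PP where
  toFun p := ⟨f (p : ℕ+), mulEquiv_prime f p.2⟩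
  invFun p := ⟨f.symm (p : ℕ+), mulEquiv_prime f.symm p.2⟩
  left_inv p := by simp
  right_inv p := by simp

lemma extendPerm_permOf (f : ℕ+ ≃* ℕ+) (x : ℕ+) : extendPerm (permOf f) x = f x := by
  have h : (extendPerm (permOf f)).toMonoidHom = f.toMonoidHom := by
    apply pnat_monoidHom_ext
    intro p hp
    have : p = ((⟨p, hp⟩ : PP) : ℕ+) := rfl
    rw [this]
    show extendPerm (permOf f) _ = _
    rw [extendPerm_prime]
    rfl
  exact DFunLike.congr_fun h x

end ExtendPerm2

section PairPerm

variable {α : Type*} {s : ℕ}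

open Classical in
/-- The involution swapping `u i ↔ v i` for each `i`, fixing everything else. -/
noncomputable def pairFun (u v : Fin s → α) (x : α) : α :=
  if h : ∃ i, u i = x then v (Classical.choose h)
  else if h : ∃ i, v i = x then u (Classical.choose h)
  else x

variable {u v : Fin s → α} (hu : Function.Injective u) (hv : Function.Injective v)
  (huv : ∀ i j, u i ≠ v j)

include hu hv huv

lemma pairFun_u (i : Fin s) : pairFun u v (u i) = v i := by
  have h : ∃ j, u j = u i := ⟨i, rfl⟩
  rw [pairFun, dif_pos h]
  exact congrArg v (hu (Classical.choose_spec h))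

lemma pairFun_v (i : Fin s) : pairFun u v (v i) = u i := by
  have h' : ¬ ∃ j, u j = v i := by rintro ⟨j, hj⟩; exact huv j i hj
  have h : ∃ j, v j = v i := ⟨i, rfl⟩
  rw [pairFun, dif_neg h', dif_pos h]
  exact congrArg u (hv (Classical.choose_spec h))

lemma pairFun_fix {x : α} (hx1 : ∀ i, u i ≠ x) (hx2 : ∀ i, v i ≠ x) :
    pairFun u v x = x := by
  rw [pairFun, dif_neg (by rintro ⟨j, hj⟩; exact hx1 j hj),
    dif_neg (by rintro ⟨j, hj⟩; exact hx2 j hj)]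

lemma pairFun_invol : Function.Involutive (pairFun u v) := by
  intro x
  by_cases h1 : ∃ i, u i = x
  · obtain ⟨i, rfl⟩ := h1
    rw [pairFun_u hu hv huv, pairFun_v hu hv huv]
  · by_cases h2 : ∃ i, v i = x
    · obtain ⟨i, rfl⟩ := h2
      rw [pairFun_v hu hv huv, pairFun_u hu hv huv]
    · push_neg at h1 h2
      rw [pairFun_fix hu hv huv h1 h2, pairFun_fix hu hv huv h1 h2]

/-- The involutive permutation swapping `u i ↔ v i`. -/
noncomputable def pairPerm : Equiv.Perm α :=
  Function.Involutive.toPerm _ (pairFun_invol hu hv huv)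

lemma pairPerm_u (i : Fin s) : pairPerm hu hv huv (u i) = v i := pairFun_u hu hv huv i
lemma pairPerm_v (i : Fin s) : pairPerm hu hv huv (v i) = u i := pairFun_v hu hv huv i
lemma pairPerm_fix {x : α} (hx1 : ∀ i, u i ≠ x) (hx2 : ∀ i, v i ≠ x) :
    pairPerm hu hv huv x = x := pairFun_fix hu hv huv hx1 hx2

end PairPerm

section LEquiv

variable {M N : Type*} [Monoid M] [Monoid N]

/-- A `MulEquiv` is an `L`-structure equivalence. -/
def mulEquivToLEquiv (f : M ≃* N) : M ≃[L] N where
  toEquiv := f.toEquiv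
  map_fun' := by
    intro n g x
    match n, g with
    | 0, g => exact map_one f
    | 2, g => exact map_mul f (x 0) (x 1)
  map_rel' := by intro n r; exact r.elim

lemma mulEquiv_realize_formula {α : Type*} (f : M ≃* N) (φ : L.Formula α) (v : α → M) :
    φ.Realize (fun a => f (v a)) ↔ φ.Realize v := by
  have := StrongHomClass.realize_formula (L := L) (mulEquivToLEquiv f) (φ := φ) (v := v)
  exact this

end LEquiv

section Infra

lemma extendPerm_mul (σ τ : Equiv.Perm PP) (x : ℕ+) :
    extendPerm (σ * τ) x = extendPerm σ (extendPerm τ x) :=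
  (DFunLike.congr_fun (permPNat_comp σ τ) x).symm

open Classical in
/-- Finset of primes as a finset of `PP`. -/
noncomputable def ppify (Y : Finset ℕ+) : Finset PP := Y.subtype _

@[simp] lemma mem_ppify {Y : Finset ℕ+} {q : PP} : q ∈ ppify Y ↔ (q : ℕ+) ∈ Y := by
  classical
  simp [ppify]

variable {n : ℕ}

/-- Componentwise action. -/
def cw (f : ℕ+ ≃* ℕ+) : (Fin n → ℕ+) → (Fin n → ℕ+) := fun a i => f (a i)

lemma cw_comp (f g : ℕ+ ≃* ℕ+) (a : Fin n → ℕ+) : cw f (cw g a) = cw (g.trans f) a := rfl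

lemma cw_image_comp (f g : ℕ+ ≃* ℕ+) (D : Set (Fin n → ℕ+)) :
    cw (n := n) (g.trans f) '' D = cw f '' (cw g '' D) := by
  rw [← Set.image_comp]
  rfl

end Infra

section Main

variable {n : ℕ} (D : Set (Fin n → ℕ+))

/-- `D` is fixed by every automorphism fixing `Y` pointwise. -/
def Cfix (Y : Finset ℕ+) : Prop :=
  ∀ f : ℕ+ ≃* ℕ+, (∀ p ∈ Y, f p = p) → cw f '' D = D

def GoodSet (Y : Finset ℕ+) : Prop := (∀ p ∈ Y, ((p : ℕ+) : ℕ).Prime) ∧ Cfix D Y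

end Main

section Closure

variable {n : ℕ} {D : Set (Fin n → ℕ+)}

lemma cfix_of_perm_fix {Y : Finset ℕ+} (hY : GoodSet D Y) (δ : Equiv.Perm PP)
    (hδ : ∀ q : PP, (q : ℕ+) ∈ Y → δ q = q) : cw (extendPerm δ) '' D = D := by
  apply hY.2
  intro p hp
  have hpp : ((p : ℕ+) : ℕ).Prime := hY.1 p hp
  have hh : p = ((⟨p, hpp⟩ : PP) : ℕ+) := rfl
  rw [hh, extendPerm_prime, hδ ⟨p, hpp⟩ hp]

lemma goodSet_inter {Y₁ Y₂ : Finset ℕ+} (h1 : GoodSet D Y₁) (h2 : GoodSet D Y₂) :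
    GoodSet D (Y₁ ∩ Y₂) := by
  classical
  refine ⟨fun p hp => h1.1 p (Finset.mem_inter.1 hp).1, ?_⟩
  intro f hf
  set σ := permOf f with hσdef
  have hσfix : ∀ q : PP, (q : ℕ+) ∈ Y₁ → (q : ℕ+) ∈ Y₂ → σ q = q := by
    intro q hq1 hq2
    exact Subtype.ext (hf _ (Finset.mem_inter.2 ⟨hq1, hq2⟩))
  set A : Finset PP := ppify Y₁ \ ppify Y₂ with hA
  set k := A.card with hk
  set ea := A.equivFin.symm with hea
  set a : Fin k → PP := fun i => (ea i : PP) with ha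
  have ha_inj : Function.Injective a := fun i j h => ea.injective (Subtype.ext h)
  have ha_mem : ∀ i, a i ∈ A := fun i => (ea i).2
  have ha_surj : ∀ p ∈ A, ∃ i, a i = p := fun p hp => ⟨ea.symm ⟨p, hp⟩, by simp [ha]⟩
  set B : Finset PP := ppify Y₁ ∪ ppify Y₂ ∪ A ∪ A.image σ with hB
  set bad : Finset PP := B ∪ B.image σ.symm with hbad
  have hinf : ((bad : Set PP)ᶜ).Infinite := bad.finite_toSet.infinite_compl
  obtain ⟨t, hts, htc⟩ := hinf.exists_subset_card_eq k
  set ez := Finset.equivFinOfCardEq htc with hez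
  set z : Fin k → PP := fun i => ((ez.symm i : t) : PP) with hz
  have hz_inj : Function.Injective z := fun i j h => by
    simpa using ez.symm.injective (Subtype.ext h)
  have hz_bad : ∀ i, z i ∉ bad := fun i => by
    have := hts (ez.symm i).2
    simpa using this
  have hB_bad : ∀ q ∈ B, q ∈ bad := fun q hq => Finset.mem_union_left _ hq
  have hA_B : ∀ q ∈ A, q ∈ B := fun q hq => by
    rw [hB, Finset.mem_union, Finset.mem_union]
    exact Or.inl (Or.inr hq)
  have hY1_B : ∀ q : PP, (q : ℕ+) ∈ Y₁ → q ∈ B := fun q hq => by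
    rw [hB, Finset.mem_union, Finset.mem_union, Finset.mem_union]
    exact Or.inl (Or.inl (Or.inl (mem_ppify.2 hq)))
  have hY2_B : ∀ q : PP, (q : ℕ+) ∈ Y₂ → q ∈ B := fun q hq => by
    rw [hB, Finset.mem_union, Finset.mem_union, Finset.mem_union]
    exact Or.inl (Or.inl (Or.inr (mem_ppify.2 hq)))
  have h_az : ∀ i j, a i ≠ z j := fun i j h =>
    hz_bad j (h ▸ hB_bad _ (hA_B _ (ha_mem i)))
  set sz : Fin k → PP := fun i => σ (z i) with hsz
  have hsz_inj : Function.Injective sz := fun i j h => hz_inj (σ.injective h)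
  have h_sza : ∀ i j, sz i ≠ a j := by
    intro i j h
    apply hz_bad i
    apply Finset.mem_union_right
    apply Finset.mem_image.2 ⟨a j, hA_B _ (ha_mem j), ?_⟩
    rw [← h]
    simp [hsz]
  set δ₁ := pairPerm ha_inj hz_inj h_az with hδ₁
  set δ₂ := pairPerm hsz_inj ha_inj h_sza with hδ₂
  set α := δ₂ * σ * δ₁ with hα
  have hαfix : ∀ q : PP, (q : ℕ+) ∈ Y₁ → α q = q := by
    intro q hq1
    by_cases hq2 : (q : ℕ+) ∈ Y₂
    · have hqB : q ∈ B := hY1_B q hq1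
      have hqA : q ∉ A := by simp [hA, mem_ppify, hq2]
      have e1 : δ₁ q = q := pairPerm_fix _ _ _
        (fun i h => hqA (h ▸ ha_mem i)) (fun i h => hz_bad i (h ▸ hB_bad _ hqB))
      have e2 : σ q = q := hσfix q hq1 hq2
      have e3 : δ₂ q = q := by
        refine pairPerm_fix _ _ _ (fun i h => ?_) (fun i h => hqA (h ▸ ha_mem i))
        apply hz_bad i
        apply Finset.mem_union_right
        refine Finset.mem_image.2 ⟨q, hqB, ?_⟩
        rw [← h]
        simp [hsz]
      show δ₂ (σ (δ₁ q)) = q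
      rw [e1, e2, e3]
    · obtain ⟨i, rfl⟩ := ha_surj q (by simp [hA, mem_ppify, hq1, hq2])
      show δ₂ (σ (δ₁ (a i))) = a i
      rw [hδ₁, pairPerm_u]
      exact pairPerm_u hsz_inj ha_inj h_sza i
  have hfact : σ = δ₂⁻¹ * (α * δ₁⁻¹) := by
    rw [hα]
    group
  have hcw : ∀ x : ℕ+, f x = extendPerm δ₂⁻¹ (extendPerm α (extendPerm δ₁⁻¹ x)) := by
    intro x
    rw [← extendPerm_permOf f x, ← hσdef, hfact, extendPerm_mul, extendPerm_mul]
  have hD1 : cw (n := n) (extendPerm δ₁⁻¹) '' D = D := by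
    refine cfix_of_perm_fix h2 _ (fun q hq => ?_)
    have hfix : δ₁ q = q := by
      have hqB : q ∈ B := hY2_B q hq
      have hqA : q ∉ A := by simp [hA, mem_ppify, hq]
      exact pairPerm_fix _ _ _ (fun i h => hqA (h ▸ ha_mem i))
        (fun i h => hz_bad i (h ▸ hB_bad _ hqB))
    calc δ₁⁻¹ q = δ₁⁻¹ (δ₁ q) := by rw [hfix]
    _ = q := Equiv.symm_apply_apply δ₁ q
  have hD3 : cw (n := n) (extendPerm δ₂⁻¹) '' D = D := by
    refine cfix_of_perm_fix h2 _ (fun q hq => ?_)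
    have hfix : δ₂ q = q := by
      have hqB : q ∈ B := hY2_B q hq
      have hqA : q ∉ A := by simp [hA, mem_ppify, hq]
      refine pairPerm_fix _ _ _ (fun i h => ?_) (fun i h => hqA (h ▸ ha_mem i))
      apply hz_bad i
      apply Finset.mem_union_right
      refine Finset.mem_image.2 ⟨q, hqB, ?_⟩
      rw [← h]
      simp [hsz]
    calc δ₂⁻¹ q = δ₂⁻¹ (δ₂ q) := by rw [hfix]
    _ = q := Equiv.symm_apply_apply δ₂ q
  have hD2 : cw (n := n) (extendPerm α) '' D = D :=
    cfix_of_perm_fix h1 _ (fun q hq => hαfix q hq)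
  have hcweq : cw (n := n) f = (cw (extendPerm δ₂⁻¹)) ∘ (cw (extendPerm α)) ∘
      (cw (extendPerm δ₁⁻¹)) := by
    funext x i
    exact hcw (x i)
  rw [hcweq, Set.image_comp, Set.image_comp, hD1, hD2, hD3]

end Closure

section PrimeFormula

/-- The formula expressing primality of the (unique) free variable. -/
def φprime : L.Formula Unit :=
  (∼(Term.bdEqual (Term.var (Sum.inl ())) tone)) ⊓
    (BoundedFormula.all (BoundedFormula.all
      ((Term.bdEqual (tmul (&0) (&1)) (Term.var (Sum.inl ()))) ⟹
        ((Term.bdEqual (&0) tone) ⊔ (Term.bdEqual (&1) tone)))))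

lemma realize_φprime (x : ℕ+) :
    φprime.Realize (fun _ => x) ↔ ((x : ℕ)).Prime := by
  rw [pchar_iff]
  simp only [φprime, Formula.Realize, BoundedFormula.realize_inf, BoundedFormula.realize_not,
    BoundedFormula.realize_bdEqual, BoundedFormula.realize_all, BoundedFormula.realize_imp,
    BoundedFormula.realize_sup, Term.realize_var, realize_tone, realize_tmul]
  constructor
  · rintro ⟨h1, h2⟩
    refine ⟨h1, fun a b hab => ?_⟩
    have := h2 a b
    simp [Fin.snoc] at this
    exact this hab
  · rintro ⟨h1, h2⟩
    refine ⟨h1, fun a b => ?_⟩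
    simp [Fin.snoc]
    exact h2 a b

end PrimeFormula

section BFInfS

/-- finset-indexed conjunction. -/
noncomputable def bfInfS {α β : Type*} {n : ℕ} (s : Finset β) (f : β → L.BoundedFormula α n) :
    L.BoundedFormula α n :=
  BoundedFormula.iInf (fun x : s => f x)

lemma realize_bfInfS {α β M : Type*} [Monoid M] {n : ℕ} (s : Finset β)
    (f : β → L.BoundedFormula α n) (v : α → M) (v' : Fin n → M) :
    (bfInfS s f).Realize v v' ↔ ∀ b ∈ s, (f b).Realize v v' :=
  BoundedFormula.realize_iInf.trans Subtype.forall

end BFInfS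

section Definability

/-- get an injective tuple of fresh primes avoiding a finite bad set -/
lemma exists_fresh (bad : Finset PP) (s : ℕ) :
    ∃ w : Fin s → PP, Function.Injective w ∧ ∀ i, w i ∉ bad := by
  have hinf : ((bad : Set PP)ᶜ).Infinite := bad.finite_toSet.infinite_compl
  obtain ⟨u, hus, huc⟩ := hinf.exists_subset_card_eq s
  set ew := Finset.equivFinOfCardEq huc
  refine ⟨fun i => ((ew.symm i : u) : PP), fun i j h => ?_, fun i => ?_⟩
  · simpa using ew.symm.injective (Subtype.ext h)
  · have := hus (ew.symm i).2
    simpa using this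

theorem definable_over {n : ℕ} (k : ℕ) (φ : L.Formula (Fin n ⊕ Fin k)) (c : Fin k → ℕ+)
    (X S : Finset ℕ+) (hXS : X ⊆ S)
    (hS : ∀ p ∈ S, ((p : ℕ+) : ℕ).Prime)
    (hSc : ∀ j, ((c j : ℕ)).primeFactors ⊆ S.image (fun p => ((p : ℕ+) : ℕ)))
    (hX : Cfix {a : Fin n → ℕ+ | φ.Realize (Sum.elim a c)} X) :
    ∃ (m : ℕ) (t : Fin m → ℕ+) (ψ : L.Formula (Fin n ⊕ Fin m)),
      (∀ i, t i ∈ X) ∧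
        {a : Fin n → ℕ+ | φ.Realize (Sum.elim a c)} =
          {a : Fin n → ℕ+ | ψ.Realize (Sum.elim a t)} := by
  classical
  set D : Set (Fin n → ℕ+) := {a | φ.Realize (Sum.elim a c)} with hD
  set m := X.card with hm
  set t : Fin m → ℕ+ := fun i => (X.equivFin.symm i : ℕ+) with ht
  have ht_mem : ∀ i, t i ∈ X := fun i => (X.equivFin.symm i).2
  have ht_surj : ∀ p ∈ X, ∃ i, t i = p := fun p hp =>
    ⟨X.equivFin ⟨p, hp⟩, by simp [ht]⟩
  set R : Finset ℕ+ := S \ X with hR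
  set s := R.card with hs
  set r : Fin s → ℕ+ := fun i => (R.equivFin.symm i : ℕ+) with hr
  have hr_mem : ∀ i, r i ∈ R := fun i => (R.equivFin.symm i).2
  have hr_inj : Function.Injective r := fun i j h =>
    (R.equivFin.symm).injective (Subtype.ext h)
  have hr_surj : ∀ p ∈ R, ∃ i, r i = p := fun p hp =>
    ⟨R.equivFin ⟨p, hp⟩, by simp [hr]⟩
  have hr_prime : ∀ i, ((r i : ℕ+) : ℕ).Prime := fun i =>
    hS _ (Finset.mem_sdiff.1 (hr_mem i)).1
  have hr_notX : ∀ i, r i ∉ X := fun i => (Finset.mem_sdiff.1 (hr_mem i)).2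
  have ht_prime : ∀ i, ((t i : ℕ+) : ℕ).Prime := fun i => hS _ (hXS (ht_mem i))
  -- the term encoding `c j`
  set cterm : Fin k → L.Term ((Fin n ⊕ Fin m) ⊕ Fin s) := fun j =>
    tprodL (List.ofFn (fun i : Fin m =>
        tpow (Term.var (Sum.inl (Sum.inr i))) (((c j : ℕ)).factorization (t i))) ++
      List.ofFn (fun i : Fin s =>
        tpow (Term.var (Sum.inr i)) (((c j : ℕ)).factorization (r i)))) with hcterm
  set Cval : Fin k → (Fin s → ℕ+) → ℕ+ := fun j y =>
    (∏ i : Fin m, t i ^ (((c j : ℕ)).factorization (t i))) *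
      ∏ i : Fin s, y i ^ (((c j : ℕ)).factorization (r i)) with hCval
  have hcterm_realize : ∀ (j : Fin k) (aa : Fin n → ℕ+) (y : Fin s → ℕ+),
      (cterm j).realize (Sum.elim (Sum.elim aa t) y) = Cval j y := by
    intro j aa y
    simp [hcterm, hCval, List.prod_ofFn, Function.comp_def]
  -- `Cval j r = c j`
  have prod_enum_X : ∀ (g : ℕ+ → ℕ+), (∏ i : Fin m, g (t i)) = ∏ p ∈ X, g p := by
    intro g
    rw [← Finset.prod_coe_sort X g]
    exact Equiv.prod_comp X.equivFin.symm (fun x : {p // p ∈ X} => g ↑x)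
  have prod_enum_R : ∀ (g : ℕ+ → ℕ+), (∏ i : Fin s, g (r i)) = ∏ p ∈ R, g p := by
    intro g
    rw [← Finset.prod_coe_sort R g]
    exact Equiv.prod_comp R.equivFin.symm (fun x : {p // p ∈ R} => g ↑x)
  have hCval_r : ∀ j, Cval j r = c j := by
    intro j
    simp only [hCval]
    rw [prod_enum_X (fun p => p ^ ((c j : ℕ)).factorization p),
      prod_enum_R (fun p => p ^ ((c j : ℕ)).factorization p)]
    rw [← Finset.prod_union (Finset.disjoint_sdiff)]
    rw [Finset.union_sdiff_of_subset hXS]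
    apply PNat.coe_injective
    have hmp : ((∏ p ∈ S, p ^ ((c j : ℕ)).factorization p : ℕ+) : ℕ)
        = ∏ p ∈ S, ((p : ℕ)) ^ ((c j : ℕ)).factorization p := by
      have := map_prod PNat.coeMonoidHom
        (fun p : ℕ+ => p ^ ((c j : ℕ)).factorization p) S
      simpa using this
    rw [hmp]
    have himg : ∏ q ∈ S.image (fun p : ℕ+ => (p : ℕ)),
        q ^ ((c j : ℕ)).factorization q
        = ∏ p ∈ S, ((p : ℕ)) ^ ((c j : ℕ)).factorization ((p : ℕ)) :=
      Finset.prod_image (by intro x _ y _ h; exact PNat.coe_injective h)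
    rw [← himg]
    rw [← Finset.prod_subset (hSc j) (by
      intro q hq hq2
      have : ((c j : ℕ)).factorization q = 0 := by
        rw [← Nat.support_factorization] at hq2
        exact Finsupp.notMem_support_iff.1 hq2
      rw [this, pow_zero])]
    rw [← Nat.support_factorization]
    exact Nat.factorization_prod_pow_eq_self (c j).ne_zero
  -- equivariance of Cval
  have hCval_equiv : ∀ (g : ℕ+ ≃* ℕ+), (∀ i, g (t i) = t i) →
      ∀ (j : Fin k) (y : Fin s → ℕ+), g (Cval j y) = Cval j (fun i => g (y i)) := by
    intro g hg j y
    simp only [hCval]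
    rw [map_mul, map_prod, map_prod]
    congr 1
    · exact Finset.prod_congr rfl (fun i _ => by rw [map_pow, hg i])
    · exact Finset.prod_congr rfl (fun i _ => by rw [map_pow])
  -- the matrix formula
  set sub : (Fin n ⊕ Fin k) → L.Term ((Fin n ⊕ Fin m) ⊕ Fin s) := fun x =>
    Sum.elim (fun i => Term.var (Sum.inl (Sum.inl i))) cterm x with hsub
  set χ : L.Formula ((Fin n ⊕ Fin m) ⊕ Fin s) :=
    (bfInfS Finset.univ
      (fun i : Fin s => φprime.subst (fun _ => Term.var (Sum.inr i)))) ⊓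
    ((bfInfS (Finset.univ.filter (fun q : Fin s × Fin s => q.1 ≠ q.2))
        (fun q => ∼(Term.equal (Term.var (Sum.inr q.1)) (Term.var (Sum.inr q.2))))) ⊓
    ((bfInfS (Finset.univ : Finset (Fin s × Fin m))
        (fun q => ∼(Term.equal (Term.var (Sum.inr q.1))
          (Term.var (Sum.inl (Sum.inr q.2)))))) ⊓
    (φ.subst sub))) with hχdef
  have hχ : ∀ (aa : Fin n → ℕ+) (y : Fin s → ℕ+),
      χ.Realize (Sum.elim (Sum.elim aa t) y) ↔
        ((∀ i, ((y i : ℕ+) : ℕ).Prime) ∧ (∀ i j : Fin s, i ≠ j → y i ≠ y j) ∧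
         (∀ (i : Fin s) (jj : Fin m), y i ≠ t jj) ∧
         φ.Realize (Sum.elim aa (fun j => Cval j y))) := by
    intro aa y
    have e1 : Formula.Realize (L := L) (M := ℕ+) (bfInfS Finset.univ
        (fun i : Fin s => φprime.subst (fun _ => Term.var (Sum.inr i))))
          (Sum.elim (Sum.elim aa t) y) ↔ ∀ i, ((y i : ℕ+) : ℕ).Prime := by
      refine Iff.trans (realize_bfInfS Finset.univ _ _ _) ?_
      constructor
      · intro h i
        have h' := h i (Finset.mem_univ i)
        rw [BoundedFormula.realize_subst] at h'
        exact (realize_φprime (y i)).1 h'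
      · intro h i _
        rw [BoundedFormula.realize_subst]
        exact (realize_φprime (y i)).2 (h i)
    have e2 : Formula.Realize (L := L) (M := ℕ+) (bfInfS
        (Finset.univ.filter (fun q : Fin s × Fin s => q.1 ≠ q.2))
        (fun q => ∼(Term.equal (Term.var (Sum.inr q.1)) (Term.var (Sum.inr q.2)))))
          (Sum.elim (Sum.elim aa t) y) ↔ ∀ i j : Fin s, i ≠ j → y i ≠ y j := by
      refine Iff.trans (realize_bfInfS _ _ _ _) ?_
      constructor
      · intro h i j hij
        have h' := h (i, j) (by simp [hij])
        have h'' : ¬ Formula.Realize (L := L) (M := ℕ+)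
            (Term.equal (Term.var (Sum.inr i)) (Term.var (Sum.inr j)))
            (Sum.elim (Sum.elim aa t) y) := h'
        rw [Formula.realize_equal] at h''
        simpa using h''
      · intro h q hq
        have hne : q.1 ≠ q.2 := by simpa using hq
        show ¬ Formula.Realize (L := L) (M := ℕ+)
            (Term.equal (Term.var (Sum.inr q.1)) (Term.var (Sum.inr q.2)))
            (Sum.elim (Sum.elim aa t) y)
        rw [Formula.realize_equal]
        simpa using h q.1 q.2 hne
    have e3 : Formula.Realize (L := L) (M := ℕ+) (bfInfS
        (Finset.univ : Finset (Fin s × Fin m))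
        (fun q => ∼(Term.equal (Term.var (Sum.inr q.1))
          (Term.var (Sum.inl (Sum.inr q.2))))))
          (Sum.elim (Sum.elim aa t) y) ↔ ∀ (i : Fin s) (jj : Fin m), y i ≠ t jj := by
      refine Iff.trans (realize_bfInfS _ _ _ _) ?_
      constructor
      · intro h i jj
        have h' := h (i, jj) (Finset.mem_univ _)
        have h'' : ¬ Formula.Realize (L := L) (M := ℕ+)
            (Term.equal (Term.var (Sum.inr i)) (Term.var (Sum.inl (Sum.inr jj))))
            (Sum.elim (Sum.elim aa t) y) := h'
        rw [Formula.realize_equal] at h''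
        simpa using h''
      · intro h q hq
        show ¬ Formula.Realize (L := L) (M := ℕ+)
            (Term.equal (Term.var (Sum.inr q.1)) (Term.var (Sum.inl (Sum.inr q.2))))
            (Sum.elim (Sum.elim aa t) y)
        rw [Formula.realize_equal]
        simpa using h q.1 q.2
    have e4 : Formula.Realize (L := L) (M := ℕ+) (φ.subst sub)
        (Sum.elim (Sum.elim aa t) y) ↔
        φ.Realize (Sum.elim aa (fun j => Cval j y)) := by
      refine Iff.trans (BoundedFormula.realize_subst (φ := φ) (tf := sub)) ?_
      have heq : (fun x => (sub x).realize (Sum.elim (Sum.elim aa t) y))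
          = Sum.elim aa (fun j => Cval j y) := by
        funext x
        cases x with
        | inl i => rfl
        | inr j => exact hcterm_realize j aa y
      rw [show (fun x => Term.realize (Sum.elim (Sum.elim aa t) y) (sub x))
          = Sum.elim aa (fun j => Cval j y) from heq]
      exact Iff.rfl
    rw [hχdef]
    exact (Formula.realize_inf).trans (and_congr e1 ((Formula.realize_inf).trans
      (and_congr e2 ((Formula.realize_inf).trans (and_congr e3 e4)))))
  set ψ : L.Formula (Fin n ⊕ Fin m) :=
    Formula.iExs (Fin s) χ with hψdef
  have hψ : ∀ aa : Fin n → ℕ+, ψ.Realize (Sum.elim aa t) ↔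
      ∃ y : Fin s → ℕ+, χ.Realize (Sum.elim (Sum.elim aa t) y) := by
    intro aa
    rw [hψdef, Formula.realize_iExs]
  refine ⟨m, t, ψ, ht_mem, ?_⟩
  ext a
  simp only [Set.mem_setOf_eq]
  constructor
  · intro ha
    rw [hψ a]
    refine ⟨r, (hχ a r).2 ⟨hr_prime, fun i j hij h => hij (hr_inj h),
      fun i jj h => hr_notX i (h ▸ ht_mem jj), ?_⟩⟩
    have : (fun j => Cval j r) = c := funext hCval_r
    rw [this]
    exact ha
  · intro hb
    rw [hψ a] at hb
    obtain ⟨y, hy⟩ := hb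
    obtain ⟨h1, h2, h3, h4⟩ := (hχ a y).1 hy
    -- build the automorphism sending `y i` to `r i` and fixing `X`
    set yp : Fin s → PP := fun i => ⟨y i, h1 i⟩ with hyp
    set rp : Fin s → PP := fun i => ⟨r i, hr_prime i⟩ with hrp
    have hyp_inj : Function.Injective yp := by
      intro i j h
      by_contra hij
      exact h2 i j hij (congrArg (fun q : PP => (q : ℕ+)) h)
    have hrp_inj : Function.Injective rp := fun i j h =>
      hr_inj (congrArg (fun q : PP => (q : ℕ+)) h)
    have hy_notX : ∀ i, y i ∉ X := by
      intro i hmem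
      obtain ⟨jj, hjj⟩ := ht_surj _ hmem
      exact h3 i jj hjj.symm
    obtain ⟨w, hw_inj, hw_bad⟩ := exists_fresh
      (ppify X ∪ Finset.image yp Finset.univ ∪ Finset.image rp Finset.univ) s
    have hw_notX : ∀ i (q : PP), (q : ℕ+) ∈ X → w i ≠ q := by
      intro i q hq h
      exact hw_bad i (h ▸ (Finset.mem_union_left _
        (Finset.mem_union_left _ (mem_ppify.2 hq))))
    have hw_y : ∀ i j, yp i ≠ w j := by
      intro i j h
      exact hw_bad j (h ▸ (Finset.mem_union_left _ (Finset.mem_union_right _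
        (Finset.mem_image_of_mem yp (Finset.mem_univ i)))))
    have hw_r : ∀ i j, w i ≠ rp j := by
      intro i j h
      exact hw_bad i (h ▸ (Finset.mem_union_right _
        (Finset.mem_image_of_mem rp (Finset.mem_univ j))))
    set π₁ := pairPerm hyp_inj hw_inj hw_y with hπ₁
    set π₂ := pairPerm hw_inj hrp_inj hw_r with hπ₂
    set σ := π₂ * π₁ with hσ
    set g := extendPerm σ with hg
    have hgfix : ∀ p ∈ X, g p = p := by
      intro p hp
      have hpp : ((p : ℕ+) : ℕ).Prime := hS p (hXS hp)
      have hpq : p = ((⟨p, hpp⟩ : PP) : ℕ+) := rfl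
      rw [hg, hpq, extendPerm_prime]
      have hfix1 : π₁ ⟨p, hpp⟩ = ⟨p, hpp⟩ := by
        refine pairPerm_fix _ _ _ (fun i h => ?_) (fun i h => hw_notX i ⟨p, hpp⟩ hp h)
        have hyi : y i = p := congrArg (fun q : PP => (q : ℕ+)) h
        exact hy_notX i (hyi ▸ hp)
      have hfix2 : π₂ ⟨p, hpp⟩ = ⟨p, hpp⟩ := by
        refine pairPerm_fix _ _ _ (fun i h => hw_notX i ⟨p, hpp⟩ hp h) (fun i h => ?_)
        have hri : r i = p := congrArg (fun q : PP => (q : ℕ+)) h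
        exact hr_notX i (hri ▸ hp)
      show ((π₂ (π₁ ⟨p, hpp⟩) : PP) : ℕ+) = p
      rw [hfix1, hfix2]
    have hgt : ∀ i, g (t i) = t i := fun i => hgfix _ (ht_mem i)
    have hgy : ∀ i, g (y i) = r i := by
      intro i
      have : y i = ((yp i : PP) : ℕ+) := rfl
      rw [hg, this, extendPerm_prime]
      show ((π₂ (π₁ (yp i)) : PP) : ℕ+) = r i
      rw [hπ₁, pairPerm_u, hπ₂, pairPerm_u]
    have h5 : φ.Realize (fun x => g (Sum.elim a (fun j => Cval j y) x)) :=
      (mulEquiv_realize_formula g φ (Sum.elim a (fun j => Cval j y))).2 h4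
    have heq : (fun x => g (Sum.elim a (fun j => Cval j y) x))
        = Sum.elim (fun i => g (a i)) c := by
      funext x
      cases x with
      | inl i => rfl
      | inr j =>
        show g (Cval j y) = c j
        rw [hCval_equiv g hgt j y, show (fun i => g (y i)) = r from funext hgy, hCval_r]
    rw [heq] at h5
    have hDfix : cw g '' D = D := hX g hgfix
    have hmem : cw (n := n) g a ∈ D := h5
    rw [← hDfix] at hmem
    obtain ⟨b, hbD, hba⟩ := hmem
    have : b = a := by
      funext i
      exact g.injective (congrFun hba i)
    exact this ▸ hbD

end Definability

section MinGood

variable {n : ℕ} {D : Set (Fin n → ℕ+)}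

lemma exists_min_good (S₀ : Finset ℕ+) (hS : GoodSet D S₀) :
    ∃ X : Finset ℕ+, GoodSet D X ∧ X ⊆ S₀ ∧ ∀ Y, GoodSet D Y → X ⊆ Y := by
  classical
  set 𝒢 := (S₀.powerset).filter (fun Y => GoodSet D Y) with h𝒢
  have hne : S₀ ∈ 𝒢 := by
    simp [h𝒢, Finset.mem_powerset, hS]
  obtain ⟨X, hX, hmin⟩ := Finset.exists_min_image 𝒢 (fun Y => Y.card) ⟨S₀, hne⟩
  have hXg : GoodSet D X := (Finset.mem_filter.1 hX).2
  have hXs : X ⊆ S₀ := Finset.mem_powerset.1 (Finset.mem_filter.1 hX).1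
  refine ⟨X, hXg, hXs, ?_⟩
  intro Y hY
  have h1 : GoodSet D (X ∩ (Y ∩ S₀)) := goodSet_inter hXg (goodSet_inter hY hS)
  have hmem : X ∩ (Y ∩ S₀) ∈ 𝒢 := by
    rw [h𝒢, Finset.mem_filter, Finset.mem_powerset]
    exact ⟨(Finset.inter_subset_right).trans Finset.inter_subset_right, h1⟩
  have hcard := hmin _ hmem
  have heq : X ∩ (Y ∩ S₀) = X :=
    Finset.eq_of_subset_of_card_le Finset.inter_subset_left hcard
  intro x hx
  rw [← heq] at hx
  exact (Finset.mem_inter.1 (Finset.mem_inter.1 hx).2).1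

lemma cw_symm_image (f : ℕ+ ≃* ℕ+) (hf : cw (n := n) f '' D = D) :
    cw (n := n) f.symm '' D = D := by
  conv_lhs => rw [← hf]
  rw [← Set.image_comp]
  convert Set.image_id D
  rename_i a _
  show (fun i => f.symm (f (a i))) = a
  funext i
  simp

lemma goodSet_image (f : ℕ+ ≃* ℕ+) (hf : cw (n := n) f '' D = D)
    {Y : Finset ℕ+} (hY : GoodSet D Y) : GoodSet D (Y.image f) := by
  classical
  constructor
  · intro p hp
    obtain ⟨q, hq, rfl⟩ := Finset.mem_image.1 hp
    exact mulEquiv_prime f (hY.1 q hq)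
  · intro g hg
    have hfix : ∀ p ∈ Y, (f.trans (g.trans f.symm)) p = p := by
      intro p hp
      have : g (f p) = f p := hg _ (Finset.mem_image_of_mem _ hp)
      show f.symm (g (f p)) = p
      rw [this]
      simp
    have hh := hY.2 _ hfix
    have hcomp : cw (n := n) g = cw f ∘ cw (f.trans (g.trans f.symm)) ∘ cw f.symm := by
      funext a i
      show g (a i) = f (f.symm (g (f (f.symm (a i)))))
      simp
    rw [hcomp, Set.image_comp, Set.image_comp, cw_symm_image f hf, hh, hf]

end MinGood

section SGood

variable {n : ℕ}

lemma cfix_of_fix_params {k : ℕ} (φ : L.Formula (Fin n ⊕ Fin k)) (c : Fin k → ℕ+)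
    (f : ℕ+ ≃* ℕ+) (hc : ∀ j, f (c j) = c j) :
    cw (n := n) f '' {a | φ.Realize (Sum.elim a c)} = {a | φ.Realize (Sum.elim a c)} := by
  have key : ∀ (g : ℕ+ ≃* ℕ+), (∀ j, g (c j) = c j) → ∀ a : Fin n → ℕ+,
      φ.Realize (Sum.elim a c) → φ.Realize (Sum.elim (cw (n := n) g a) c) := by
    intro g hg a ha
    have h1 : φ.Realize (fun x => g (Sum.elim a c x)) :=
      (mulEquiv_realize_formula g φ (Sum.elim a c)).2 ha
    have h2 : (fun x => g (Sum.elim a c x)) = Sum.elim (cw (n := n) g a) c := by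
      funext x
      cases x with
      | inl i => rfl
      | inr j => exact hg j
    rwa [h2] at h1
  have hcs : ∀ j, f.symm (c j) = c j := by
    intro j
    conv_lhs => rw [← hc j]
    simp
  ext b
  constructor
  · rintro ⟨a, ha, rfl⟩
    exact key f hc a ha
  · intro hb
    refine ⟨cw (n := n) f.symm b, key f.symm hcs b hb, ?_⟩
    funext i
    simp [cw]

lemma goodSet_S {k : ℕ} (φ : L.Formula (Fin n ⊕ Fin k)) (c : Fin k → ℕ+) :
    ∃ S : Finset ℕ+, GoodSet {a : Fin n → ℕ+ | φ.Realize (Sum.elim a c)} S ∧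
      ∀ j, ((c j : ℕ)).primeFactors ⊆ S.image (fun p => ((p : ℕ+) : ℕ)) := by
  classical
  set S : Finset ℕ+ :=
    Finset.univ.biUnion (fun j : Fin k => ((c j : ℕ)).primeFactors.image Nat.toPNat')
    with hSdef
  have hmem : ∀ p : ℕ+, p ∈ S ↔ ∃ j, ((p : ℕ+) : ℕ) ∈ ((c j : ℕ)).primeFactors := by
    intro p
    rw [hSdef]
    simp only [Finset.mem_biUnion, Finset.mem_univ, true_and, Finset.mem_image]
    constructor
    · rintro ⟨j, q, hq, rfl⟩
      have hq' : 0 < q := (Nat.prime_of_mem_primeFactors hq).pos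
      have : ((q.toPNat' : ℕ+) : ℕ) = q := by rw [Nat.toPNat'_coe]; exact if_pos hq'
      rw [this]
      exact ⟨j, hq⟩
    · rintro ⟨j, hj⟩
      refine ⟨j, (p : ℕ), hj, ?_⟩
      apply PNat.coe_injective
      exact by rw [Nat.toPNat'_coe]; exact if_pos p.pos
  have hSprime : ∀ p ∈ S, ((p : ℕ+) : ℕ).Prime := by
    intro p hp
    obtain ⟨j, hj⟩ := (hmem p).1 hp
    exact Nat.prime_of_mem_primeFactors hj
  refine ⟨S, ⟨hSprime, ?_⟩, ?_⟩
  · intro f hf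
    apply cfix_of_fix_params φ c f
    intro j
    apply pnat_fix_of_prime_divisors
    intro p hp hpd
    apply hf
    rw [hmem p]
    refine ⟨j, Nat.mem_primeFactors.2 ⟨hp, ?_, (c j).ne_zero⟩⟩
    obtain ⟨d, hd⟩ := hpd
    exact ⟨(d : ℕ), by rw [hd]; simp⟩
  · intro j q hq
    have hq' : 0 < q := (Nat.prime_of_mem_primeFactors hq).pos
    refine Finset.mem_image.2 ⟨q.toPNat', ?_, by rw [Nat.toPNat'_coe]; exact if_pos hq'⟩
    rw [hmem]
    refine ⟨j, ?_⟩
    rw [show ((q.toPNat' : ℕ+) : ℕ) = q from by rw [Nat.toPNat'_coe]; exact if_pos hq']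
    exact hq

end SGood


/-- Every definable set of squarefree tuples has an almost canonical parameter: a finite
set `X` over (a tuple from) which `D` is definable and which is fixed setwise by every
monoid automorphism of `ℕ⁺` fixing `D` setwise. -/
theorem definable_radical_set_weak_code (n : ℕ) (D : Set (Fin n → ℕ+))
    (hdef : ∃ (k : ℕ) (φ : L.Formula (Fin n ⊕ Fin k)) (c : Fin k → ℕ+),
      D = {a | φ.Realize (Sum.elim a c)})
    (hsq : ∀ d ∈ D, ∀ i, Sqf (d i)) :
    ∃ X : Finset ℕ+,
      (∃ (k : ℕ) (t : Fin k → ℕ+) (φ : L.Formula (Fin n ⊕ Fin k)),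
        (∀ i, t i ∈ X) ∧ D = {a | φ.Realize (Sum.elim a t)}) ∧
      ∀ f : ℕ+ ≃* ℕ+, (fun a : Fin n → ℕ+ => fun i => f (a i)) '' D = D →
        X.image (f : ℕ+ → ℕ+) = X := by
  obtain ⟨k, φ, c, rfl⟩ := hdef
  obtain ⟨S, hSg, hSc⟩ := goodSet_S φ c
  obtain ⟨X, hXg, hXS, hmin⟩ := exists_min_good S hSg
  refine ⟨X, ?_, ?_⟩
  · obtain ⟨m, t, ψ, htm, heq⟩ := definable_over k φ c X S hXS hSg.1 hSc hXg.2
    exact ⟨m, t, ψ, htm, heq⟩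
  · intro f hf
    have hf' : cw (n := n) f '' {a : Fin n → ℕ+ | φ.Realize (Sum.elim a c)} =
        {a : Fin n → ℕ+ | φ.Realize (Sum.elim a c)} := hf
    have hfg := goodSet_image f hf' hXg
    have hsub : X ⊆ X.image (f : ℕ+ → ℕ+) := hmin _ hfg
    exact (Finset.eq_of_subset_of_card_le hsub
      (le_of_eq (Finset.card_image_of_injective X f.injective))).symm
end
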